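/- arXiv:1701.03863 — 6 statements merged into one kernel-verified Lean document; each statement's English description precedes it below -/
import Mathlib

section
/- Fix β > 0 and integers n, p with 1 < p < n. Let J be a uniformly random subset of {1, …, n} of size p and let S = S_J be its column selector matrix, so that expectations are averages over all C(n,p) subsets of size p. Then for the matrix A = I_n + (β/n)·𝟙𝟙ᵀ, the minimum eigenvalue of E[S (SᵀAS)⁻¹ Sᵀ A] equals p/(n + βp) + (p−1)βp/((n−1)(n + βp)). -/
open scoped BigOperators Matrix

noncomputable section

/-- The column selector matrix of an index set `J` of size `p`: its columns are the
standard basis vectors indexed by `J` (in increasing order).  If `J` does not have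
cardinality `p` we return the zero matrix (this case never occurs below). -/
def selector {n : ℕ} (p : ℕ) (J : Finset (Fin n)) : Matrix (Fin n) (Fin p) ℝ :=
  if h : J.card = p then
    Matrix.of fun i j => if i = ((J.orderIsoOfFin h j : { x // x ∈ J }) : Fin n) then (1 : ℝ) else 0
  else 0

/-- The set of (real) eigenvalues of a square matrix. -/
def eigs {q : ℕ} (M : Matrix (Fin q) (Fin q) ℝ) : Set ℝ :=
  {r : ℝ | ∃ v : Fin q → ℝ, v ≠ 0 ∧ M.mulVec v = r • v}

section S5

variable {n p : ℕ}

lemma selector_apply (J : Finset (Fin n)) (h : J.card = p) (i : Fin n) (j : Fin p) :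
    selector p J i j = if i = ((J.orderIsoOfFin h j : { x // x ∈ J }) : Fin n) then (1 : ℝ) else 0 := by
  simp [selector, h]

lemma sum_sel (J : Finset (Fin n)) (h : J.card = p) (i : Fin n) (X : Fin p → ℝ) :
    (∑ j, (if i = ((J.orderIsoOfFin h j : { x // x ∈ J }) : Fin n) then (1:ℝ) else 0) * X j)
    = if hi : i ∈ J then X ((J.orderIsoOfFin h).symm ⟨i, hi⟩) else 0 := by
  by_cases hi : i ∈ J
  · have key : ∀ j : Fin p,
        (i = ((J.orderIsoOfFin h j : { x // x ∈ J }) : Fin n)) ↔ ((J.orderIsoOfFin h).symm ⟨i, hi⟩ = j) := by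
      intro j
      constructor
      · intro hij
        have : (⟨i, hi⟩ : { x // x ∈ J }) = J.orderIsoOfFin h j := Subtype.ext hij
        rw [this, OrderIso.symm_apply_apply]
      · intro hj
        have := congrArg Subtype.val ((J.orderIsoOfFin h).apply_symm_apply ⟨i, hi⟩)
        rw [← hj]
        exact this.symm
    simp only [key, ite_mul, one_mul, zero_mul]
    rw [Finset.sum_ite_eq Finset.univ ((J.orderIsoOfFin h).symm ⟨i, hi⟩) X]
    simp [hi]
  · have hni : ∀ j : Fin p, ¬ (i = ((J.orderIsoOfFin h j : { x // x ∈ J }) : Fin n)) := by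
      intro j hij
      exact hi (hij ▸ (J.orderIsoOfFin h j).2)
    simp only [hni, if_false, zero_mul, Finset.sum_const_zero, dif_neg hi]

lemma B_apply (β : ℝ) (J : Finset (Fin n)) (h : J.card = p)
    (A : Matrix (Fin n) (Fin n) ℝ)
    (hA : A = (1 : Matrix (Fin n) (Fin n) ℝ) + (β / n) • Matrix.of (fun _ _ => (1 : ℝ)))
    (j k : Fin p) :
    ((selector p J)ᵀ * A * selector p J) j k = (if j = k then 1 else 0) + β / n := by
  set f : Fin p → Fin n := fun j => ((J.orderIsoOfFin h j : { x // x ∈ J }) : Fin n) with hf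
  have hfinj : Function.Injective f := by
    intro a b hab
    exact (J.orderIsoOfFin h).injective (Subtype.coe_injective hab)
  have hS : ∀ i j, selector p J i j = if i = f j then (1:ℝ) else 0 := selector_apply J h
  have hSA : ∀ (j : Fin p) (i' : Fin n), ((selector p J)ᵀ * A) j i' = A (f j) i' := by
    intro j i'
    simp only [Matrix.mul_apply, Matrix.transpose_apply, hS, ite_mul, one_mul, zero_mul]
    rw [Finset.sum_ite_eq' Finset.univ (f j) (fun i => A i i')]
    simp
  rw [Matrix.mul_apply]
  simp only [hSA, hS, mul_ite, mul_one, mul_zero]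
  rw [Finset.sum_ite_eq' Finset.univ (f k) (fun i => A (f j) i)]
  simp only [Finset.mem_univ, if_true, hA]
  simp only [Matrix.add_apply, Matrix.smul_apply, Matrix.one_apply, Matrix.of_apply, smul_eq_mul, mul_one]
  congr 1
  by_cases hjk : j = k <;> simp [hjk, hfinj.eq_iff]

lemma Binv (β : ℝ) (hβ : 0 < β) (hn : 0 < n) (hd : (0:ℝ) < n + β * p)
    (B : Matrix (Fin p) (Fin p) ℝ)
    (hB : ∀ j k, B j k = (if j = k then 1 else 0) + β / n) :
    B⁻¹ = Matrix.of (fun j k => (if j = k then (1:ℝ) else 0) - β / (n + β * p)) := by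
  apply Matrix.inv_eq_right_inv
  ext j k
  rw [Matrix.mul_apply]
  simp only [hB, Matrix.of_apply]
  have hn' : (n:ℝ) ≠ 0 := by positivity
  have hd' : (n:ℝ) + β * p ≠ 0 := ne_of_gt hd
  simp only [add_mul, mul_sub, Finset.sum_add_distrib, Finset.sum_sub_distrib,
    ite_mul, one_mul, zero_mul, mul_ite, mul_one, mul_zero]
  rw [Finset.sum_ite_eq' Finset.univ k (fun m => (if j = m then (1:ℝ) else 0) + β / n),
    Finset.sum_ite_eq Finset.univ j (fun _ => β / (n + β * p))]
  simp only [Finset.sum_const, Finset.card_univ, Fintype.card_fin, nsmul_eq_mul,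
    Finset.mem_univ, if_true, Matrix.one_apply]
  by_cases hjk : j = k <;> simp only [hjk, if_true, if_false] <;> field_simp <;> ring

lemma P_entry (β : ℝ) (hβ : 0 < β) (hn : 0 < n) (hd : (0:ℝ) < n + β * p)
    (J : Finset (Fin n)) (h : J.card = p)
    (A : Matrix (Fin n) (Fin n) ℝ)
    (hA : A = (1 : Matrix (Fin n) (Fin n) ℝ) + (β / n) • Matrix.of (fun _ _ => (1 : ℝ)))
    (i k : Fin n) :
    (selector p J * ((selector p J)ᵀ * A * selector p J)⁻¹ * (selector p J)ᵀ * A) i k =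
      (if i ∈ J ∧ i = k then 1 else 0)
        + (β / (n + β * p)) * (if i ∈ J ∧ k ∉ J then 1 else 0) := by
  have hS : ∀ i j, selector p J i j
      = if i = ((J.orderIsoOfFin h j : { x // x ∈ J }) : Fin n) then (1:ℝ) else 0 := selector_apply J h
  set c : ℝ := β / (n + β * p) with hc
  have hBinv : ((selector p J)ᵀ * A * selector p J)⁻¹
      = Matrix.of (fun j k => (if j = k then (1:ℝ) else 0) - c) :=
    Binv β hβ hn hd _ (B_apply β J h A hA)
  -- M := S * B⁻¹ * Sᵀ
  have hM : ∀ i i' : Fin n, (selector p J * ((selector p J)ᵀ * A * selector p J)⁻¹ * (selector p J)ᵀ) i i'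
      = (if i = i' ∧ i ∈ J then 1 else 0)
        - c * ((if i ∈ J then 1 else 0) * (if i' ∈ J then 1 else 0)) := by
    intro i i'
    have hSC : ∀ (m : Fin p), (selector p J * ((selector p J)ᵀ * A * selector p J)⁻¹) i m
        = if hi : i ∈ J then ((if ((J.orderIsoOfFin h).symm ⟨i, hi⟩) = m then (1:ℝ) else 0) - c) else 0 := by
      intro m
      rw [Matrix.mul_apply]
      simp only [hS, hBinv, Matrix.of_apply]
      exact sum_sel J h i (fun j => (if j = m then (1:ℝ) else 0) - c)
    rw [Matrix.mul_apply]
    by_cases hi : i ∈ J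
    · simp only [hSC, dif_pos hi, Matrix.transpose_apply, hS]
      have : ∀ m : Fin p,
          ((if ((J.orderIsoOfFin h).symm ⟨i, hi⟩) = m then (1:ℝ) else 0) - c)
            * (if i' = ((J.orderIsoOfFin h m : { x // x ∈ J }) : Fin n) then (1:ℝ) else 0)
          = (if i' = ((J.orderIsoOfFin h m : { x // x ∈ J }) : Fin n) then (1:ℝ) else 0)
            * ((if ((J.orderIsoOfFin h).symm ⟨i, hi⟩) = m then (1:ℝ) else 0) - c) := by
        intro m; ring
      rw [Finset.sum_congr rfl (fun m _ => this m),
        sum_sel J h i' (fun m => (if ((J.orderIsoOfFin h).symm ⟨i, hi⟩) = m then (1:ℝ) else 0) - c)]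
      by_cases hi' : i' ∈ J
      · rw [dif_pos hi']
        have heq : (((J.orderIsoOfFin h).symm ⟨i, hi⟩) = ((J.orderIsoOfFin h).symm ⟨i', hi'⟩)) ↔ i = i' := by
          rw [(J.orderIsoOfFin h).symm.injective.eq_iff]
          exact ⟨fun hh => congrArg Subtype.val hh, fun hh => Subtype.ext hh⟩
        by_cases hii : i = i'
        · simp [heq, hii, hi', hi ]
        · simp only [hii, hi, hi', and_true, if_false, if_true, heq]
          simp [hii]
      · rw [dif_neg hi']
        have hii : i ≠ i' := fun hh => hi' (hh ▸ hi)
        simp [hi, hi', hii]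
    · simp only [hSC, dif_neg hi, zero_mul, Finset.sum_const_zero]
      simp [hi]
  have hAe : ∀ i' k : Fin n, A i' k = (if i' = k then (1:ℝ) else 0) + β / n := by
    intro i' k
    simp [hA, Matrix.one_apply]
  rw [Matrix.mul_apply]
  simp only [hM, hAe]
  by_cases hi : i ∈ J
  · simp only [hi, if_true, and_true, true_and, mul_one, one_mul]
    have hn' : (n:ℝ) ≠ 0 := by positivity
    have hd' : (n:ℝ) + β * p ≠ 0 := ne_of_gt hd
    have e1 : (∑ i' : Fin n, (if i = i' then (1:ℝ) else 0) * ((if i' = k then 1 else 0) + β / n))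
        = (if i = k then 1 else 0) + β / n := by
      simp only [ite_mul, one_mul, zero_mul]
      rw [Finset.sum_ite_eq Finset.univ i (fun i' => (if i' = k then (1:ℝ) else 0) + β / n)]
      simp
    have e2 : (∑ i' : Fin n, (if i' ∈ J then (1:ℝ) else 0) * ((if i' = k then 1 else 0) + β / n))
        = (if k ∈ J then 1 else 0) + p * (β / n) := by
      simp only [mul_add, ite_mul, one_mul, zero_mul, Finset.sum_add_distrib]
      congr 1
      · have : ∀ i' : Fin n, (if i' ∈ J then (if i' = k then (1:ℝ) else 0) else 0)
            = (if i' = k then (if i' ∈ J then (1:ℝ) else 0) else 0) := by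
          intro i'; by_cases h1 : i' ∈ J <;> by_cases h2 : i' = k <;> simp [h1, h2]
        simp only [Finset.sum_ite_mem, Finset.univ_inter]
        rw [Finset.sum_ite_eq' J k (fun _ => (1:ℝ))]
      · simp only [Finset.sum_ite_mem, Finset.univ_inter, Finset.sum_const, h, nsmul_eq_mul]
    calc (∑ i' : Fin n, ((if i = i' then (1:ℝ) else 0) - c * (if i' ∈ J then 1 else 0))
            * ((if i' = k then 1 else 0) + β / n))
        = (∑ i' : Fin n, (if i = i' then (1:ℝ) else 0) * ((if i' = k then 1 else 0) + β / n))
          - c * (∑ i' : Fin n, (if i' ∈ J then (1:ℝ) else 0) * ((if i' = k then 1 else 0) + β / n)) := by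
          rw [Finset.mul_sum, ← Finset.sum_sub_distrib]
          congr 1; ext i'; ring
      _ = ((if i = k then 1 else 0) + β / n) - c * ((if k ∈ J then 1 else 0) + p * (β / n)) := by
          rw [e1, e2]
      _ = (if i = k then (1:ℝ) else 0) + c * (if k ∉ J then 1 else 0) := by
          by_cases hk : k ∈ J <;> by_cases hik : i = k <;>
            simp only [hk, hik, not_true, not_false_iff, if_true, if_false] <;>
            rw [hc] <;> field_simp <;> try ring
  · simp only [hi, if_false, false_and, if_false, mul_zero, zero_mul, sub_zero, add_zero, and_false]
    simp [hi]

end S5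

section C1
variable {n p : ℕ}

lemma count1 (hp : 0 < p) (i : Fin n) :
    ((Finset.powersetCard p (Finset.univ : Finset (Fin n))).filter (fun J => i ∈ J)).card
      = (n-1).choose (p-1) := by
  have : ((Finset.powersetCard p (Finset.univ : Finset (Fin n))).filter (fun J => i ∈ J)).card
      = (Finset.powersetCard (p-1) ((Finset.univ : Finset (Fin n)).erase i)).card := by
    apply Finset.card_nbij' (fun J => J.erase i) (fun K => insert i K)
    · intro J hJ
      simp only [Finset.mem_coe, Finset.mem_filter, Finset.mem_powersetCard] at hJ
      simp only [Finset.mem_coe, Finset.mem_powersetCard]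
      constructor
      · intro x hx
        simp only [Finset.mem_erase] at hx ⊢
        exact ⟨hx.1, Finset.mem_univ x⟩
      · rw [Finset.card_erase_of_mem hJ.2, hJ.1.2]
    · intro K hK
      simp only [Finset.mem_coe, Finset.mem_powersetCard] at hK
      have hiK : i ∉ K := fun hiK => by
        have := hK.1 hiK
        simp at this
      simp only [Finset.mem_coe, Finset.mem_filter, Finset.mem_powersetCard]
      refine ⟨⟨Finset.subset_univ _, ?_⟩, Finset.mem_insert_self i K⟩
      rw [Finset.card_insert_of_notMem hiK, hK.2]
      omega
    · intro J hJ
      simp only [Finset.mem_coe, Finset.mem_filter] at hJ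
      exact Finset.insert_erase hJ.2
    · intro K hK
      simp only [Finset.mem_coe, Finset.mem_powersetCard] at hK
      have hiK : i ∉ K := fun hiK => by
        have := hK.1 hiK
        simp at this
      exact Finset.erase_insert hiK
  rw [this, Finset.card_powersetCard, Finset.card_erase_of_mem (Finset.mem_univ i),
    Finset.card_univ, Fintype.card_fin]

lemma count2 (hp : 0 < p) (i k : Fin n) (hik : i ≠ k) :
    ((Finset.powersetCard p (Finset.univ : Finset (Fin n))).filter (fun J => i ∈ J ∧ k ∉ J)).card
      = (n-2).choose (p-1) := by
  have : ((Finset.powersetCard p (Finset.univ : Finset (Fin n))).filter (fun J => i ∈ J ∧ k ∉ J)).card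
      = (Finset.powersetCard (p-1) (((Finset.univ : Finset (Fin n)).erase k).erase i)).card := by
    apply Finset.card_nbij' (fun J => J.erase i) (fun K => insert i K)
    · intro J hJ
      simp only [Finset.mem_coe, Finset.mem_filter, Finset.mem_powersetCard] at hJ
      simp only [Finset.mem_coe, Finset.mem_powersetCard]
      constructor
      · intro x hx
        simp only [Finset.mem_erase] at hx ⊢
        refine ⟨hx.1, fun hxk => hJ.2.2 (hxk ▸ hx.2), Finset.mem_univ x⟩
      · rw [Finset.card_erase_of_mem hJ.2.1, hJ.1.2]
    · intro K hK
      simp only [Finset.mem_coe, Finset.mem_powersetCard] at hK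
      have hiK : i ∉ K := fun hiK => by
        have := hK.1 hiK
        simp at this
      have hkK : k ∉ insert i K := by
        intro hk
        rcases Finset.mem_insert.1 hk with h1 | h1
        · exact hik h1.symm
        · have := hK.1 h1
          simp only [Finset.mem_erase] at this
          exact this.2.1 rfl
      simp only [Finset.mem_coe, Finset.mem_filter, Finset.mem_powersetCard]
      refine ⟨⟨Finset.subset_univ _, ?_⟩, Finset.mem_insert_self i K, hkK⟩
      rw [Finset.card_insert_of_notMem hiK, hK.2]
      omega
    · intro J hJ
      simp only [Finset.mem_coe, Finset.mem_filter] at hJ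
      exact Finset.insert_erase hJ.2.1
    · intro K hK
      simp only [Finset.mem_coe, Finset.mem_powersetCard] at hK
      have hiK : i ∉ K := fun hiK => by
        have := hK.1 hiK
        simp at this
      exact Finset.erase_insert hiK
  rw [this, Finset.card_powersetCard, Finset.card_erase_of_mem, Finset.card_erase_of_mem (Finset.mem_univ k),
    Finset.card_univ, Fintype.card_fin]
  · congr 1
  · exact Finset.mem_erase.2 ⟨hik, Finset.mem_univ i⟩

end C1

section C2
variable {n p : ℕ}

lemma R1 (hp : 0 < p) (hpn : p ≤ n) :
    (n:ℝ) * ((n-1).choose (p-1)) = p * (n.choose p) := by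
  have h := Nat.add_one_mul_choose_eq (n-1) (p-1)
  have h1 : n - 1 + 1 = n := by omega
  have h2 : p - 1 + 1 = p := by omega
  rw [h1, h2] at h
  have := congrArg (Nat.cast : ℕ → ℝ) h
  push_cast at this
  linarith [this]

lemma R2 (hp : 0 < p) (hn : 2 ≤ n) :
    ((n:ℝ) - 1) * ((n-2).choose (p-1)) = p * ((n-1).choose p) := by
  have h := Nat.add_one_mul_choose_eq (n-2) (p-1)
  have h1 : n - 2 + 1 = n - 1 := by omega
  have h2 : p - 1 + 1 = p := by omega
  rw [h1, h2] at h
  have := congrArg (Nat.cast : ℕ → ℝ) h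
  push_cast [Nat.cast_sub (by omega : 1 ≤ n)] at this ⊢
  linarith [this]

lemma R3 (hn : 1 ≤ n) (hpn : p ≤ n) :
    (n:ℝ) * ((n-1).choose p) = ((n:ℝ) - p) * (n.choose p) := by
  have h := Nat.choose_mul_succ_eq (n-1) p
  have h1 : n - 1 + 1 = n := by omega
  rw [h1] at h
  have := congrArg (Nat.cast : ℕ → ℝ) h
  push_cast [Nat.cast_sub hpn] at this
  linarith [this]

lemma R4 (hp : 0 < p) (hn : 2 ≤ n) (hpn : p ≤ n) :
    (n:ℝ) * ((n:ℝ) - 1) * ((n-2).choose (p-1)) = p * ((n:ℝ) - p) * (n.choose p) := by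
  have r2 := R2 hp hn
  have r3 := R3 (by omega) hpn
  nlinarith [r2, r3]

end C2

section Estmt
variable {n p : ℕ}

lemma E_entry (β : ℝ) (hβ : 0 < β) (hp : 1 < p) (hpn : p < n)
    (A : Matrix (Fin n) (Fin n) ℝ)
    (hA : A = (1 : Matrix (Fin n) (Fin n) ℝ) + (β / n) • Matrix.of (fun _ _ => (1 : ℝ)))
    (E : Matrix (Fin n) (Fin n) ℝ)
    (hE : E = ((n.choose p : ℝ))⁻¹ • (∑ J ∈ Finset.powersetCard p (Finset.univ : Finset (Fin n)),
      selector p J * ((selector p J)ᵀ * A * selector p J)⁻¹ * (selector p J)ᵀ * A))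
    (i k : Fin n) :
    E i k = if i = k then (p:ℝ)/n
      else (β/((n:ℝ)+β*p)) * ((p:ℝ) * ((n:ℝ)-(p:ℝ))) / ((n:ℝ) * ((n:ℝ)-1)) := by
  have hn0 : 0 < n := lt_trans (lt_trans Nat.zero_lt_one hp) hpn
  have hnR : (0:ℝ) < n := by exact_mod_cast hn0
  have hd : (0:ℝ) < (n:ℝ) + β * p := by
    have : (0:ℝ) < β * p := by
      have : (0:ℝ) < p := by exact_mod_cast lt_trans Nat.zero_lt_one hp
      positivity
    linarith
  have hC : ((n.choose p : ℝ)) ≠ 0 := by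
    exact_mod_cast (Nat.choose_pos (le_of_lt hpn)).ne'
  have hn1 : ((n:ℝ) - 1) ≠ 0 := by
    have : (1:ℝ) < n := by exact_mod_cast lt_trans hp hpn
    linarith
  rw [hE]
  simp only [Matrix.smul_apply, Matrix.sum_apply, smul_eq_mul]
  rw [Finset.sum_congr rfl (fun J hJ =>
    P_entry β hβ hn0 hd J (Finset.mem_powersetCard_univ.1 hJ) A hA i k)]
  rw [Finset.sum_add_distrib, ← Finset.mul_sum, Finset.sum_boole, Finset.sum_boole]
  by_cases hik : i = k
  · subst hik
    have c1 : (Finset.powersetCard p (Finset.univ : Finset (Fin n))).filter (fun J => i ∈ J ∧ i = i)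
        = (Finset.powersetCard p (Finset.univ : Finset (Fin n))).filter (fun J => i ∈ J) := by
      apply Finset.filter_congr; intro J _; simp
    have c2 : (Finset.powersetCard p (Finset.univ : Finset (Fin n))).filter (fun J => i ∈ J ∧ i ∉ J)
        = ∅ := by
      apply Finset.filter_false_of_mem; intro J _; simp
    rw [c1, c2, count1 (lt_trans Nat.zero_lt_one hp) i]
    simp only [Finset.card_empty, Nat.cast_zero, mul_zero, add_zero, if_true]
    have r1 := R1 (lt_trans Nat.zero_lt_one hp) (le_of_lt hpn)
    field_simp
    linarith [r1]
  · have c1 : (Finset.powersetCard p (Finset.univ : Finset (Fin n))).filter (fun J => i ∈ J ∧ i = k)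
        = ∅ := by
      apply Finset.filter_false_of_mem; intro J _; simp [hik]
    have c2 : (Finset.powersetCard p (Finset.univ : Finset (Fin n))).filter (fun J => i ∈ J ∧ k ∉ J)
        = ((Finset.powersetCard p (Finset.univ : Finset (Fin n))).filter (fun J => i ∈ J ∧ k ∉ J)) := rfl
    rw [c1, count2 (lt_trans Nat.zero_lt_one hp) i k hik]
    simp only [Finset.card_empty, Nat.cast_zero, zero_add, if_neg hik]
    have r4 := R4 (lt_trans Nat.zero_lt_one hp) (by omega) (le_of_lt hpn)
    have hdd : ((n:ℝ) + β * p) ≠ 0 := ne_of_gt hd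
    field_simp
    linear_combination r4

end Estmt


/-- For the matrix `A = I + (β/n) 𝟙𝟙ᵀ` and `J` a uniformly random
subset of `{1,…,n}` of size `p` (with column selector `S = S_J`), the minimum
eigenvalue of `E[S (SᵀAS)⁻¹ Sᵀ A]` equals
`p/(n + βp) + (p−1)βp/((n−1)(n + βp))`. -/
theorem stmt1 (β : ℝ) (hβ : 0 < β) (n p : ℕ) (hp : 1 < p) (hpn : p < n)
    (A : Matrix (Fin n) (Fin n) ℝ)
    (hA : A = (1 : Matrix (Fin n) (Fin n) ℝ) + (β / n) • Matrix.of (fun _ _ => (1 : ℝ)))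
    (E : Matrix (Fin n) (Fin n) ℝ)
    (hE : E = ((n.choose p : ℝ))⁻¹ • (∑ J ∈ Finset.powersetCard p (Finset.univ : Finset (Fin n)),
      selector p J * ((selector p J)ᵀ * A * selector p J)⁻¹ * (selector p J)ᵀ * A)) :
    IsLeast (eigs E)
      ((p : ℝ) / (n + β * p) + ((p : ℝ) - 1) * β * p / (((n : ℝ) - 1) * (n + β * p))) := by
  have hn0 : 0 < n := lt_trans (lt_trans Nat.zero_lt_one hp) hpn
  have hnR : (0:ℝ) < n := by exact_mod_cast hn0
  have hpR : (0:ℝ) < p := by exact_mod_cast lt_trans Nat.zero_lt_one hp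
  have hn1 : (1:ℝ) < n := by exact_mod_cast lt_trans hp hpn
  have hpnR : (p:ℝ) < n := by exact_mod_cast hpn
  have hd : (0:ℝ) < (n:ℝ) + β * p := by nlinarith
  set d : ℝ := (p:ℝ)/n with hdd
  set b : ℝ := (β/((n:ℝ)+β*p)) * ((p:ℝ) * ((n:ℝ)-(p:ℝ))) / ((n:ℝ) * ((n:ℝ)-1)) with hb
  have hbpos : 0 < b := by
    rw [hb]
    have h1 : (0:ℝ) < β/((n:ℝ)+β*p) := div_pos hβ hd
    have h2 : (0:ℝ) < (p:ℝ) * ((n:ℝ)-(p:ℝ)) := by nlinarith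
    have h3 : (0:ℝ) < (n:ℝ) * ((n:ℝ)-1) := by nlinarith
    positivity
  have hEe : ∀ i k : Fin n, E i k = if i = k then d else b :=
    E_entry β hβ hp hpn A hA E hE
  set t : ℝ := (p : ℝ) / (n + β * p) + ((p : ℝ) - 1) * β * p / (((n : ℝ) - 1) * (n + β * p)) with ht
  have key : t = d - b := by
    rw [ht, hdd, hb]
    have h1 : ((n:ℝ) - 1) ≠ 0 := by linarith
    have h2 : ((n:ℝ) + β * p) ≠ 0 := ne_of_gt hd
    have h3 : (n:ℝ) ≠ 0 := ne_of_gt hnR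
    field_simp
    ring
  have hmv : ∀ (v : Fin n → ℝ) (i : Fin n),
      E.mulVec v i = (d - b) * v i + b * (∑ k, v k) := by
    intro v i
    rw [Matrix.mulVec]
    show (∑ k, E i k * v k) = _
    have : ∀ k : Fin n, E i k * v k = (d - b) * ((if i = k then (1:ℝ) else 0) * v k) + b * v k := by
      intro k
      rw [hEe]
      by_cases hik : i = k <;> simp [hik] <;> ring
    rw [Finset.sum_congr rfl (fun k _ => this k), Finset.sum_add_distrib, ← Finset.mul_sum,
      ← Finset.mul_sum]
    congr 2
    simp only [ite_mul, one_mul, zero_mul]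
    rw [Finset.sum_ite_eq Finset.univ i v]
    simp
  constructor
  · -- membership: eigenvector single i0 - single i1
    have h2n : 2 ≤ n := by omega
    set i0 : Fin n := ⟨0, by omega⟩
    set i1 : Fin n := ⟨1, by omega⟩
    have hi01 : i0 ≠ i1 := by
      intro hcon
      have := congrArg Fin.val hcon
      simp [i0, i1] at this
    set v : Fin n → ℝ := Pi.single i0 1 - Pi.single i1 1 with hv
    have hsumv : (∑ k, v k) = 0 := by
      simp only [hv, Pi.sub_apply, Finset.sum_sub_distrib]
      rw [Finset.sum_pi_single' i0 (1:ℝ), Finset.sum_pi_single' i1 (1:ℝ)]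
      simp
    have hvne : v ≠ 0 := by
      intro hcon
      have : v i0 = 0 := by rw [hcon]; rfl
      rw [hv] at this
      simp [Pi.single_apply, hi01] at this
    refine ⟨v, hvne, ?_⟩
    funext i
    rw [hmv, hsumv, key]
    simp
  · -- lower bound
    rintro r ⟨v, hvne, heig⟩
    have heig' : ∀ i, (d - b) * v i + b * (∑ k, v k) = r * v i := by
      intro i
      have := congrFun heig i
      rw [hmv] at this
      simpa using this
    set s : ℝ := ∑ k, v k with hs
    by_cases hs0 : s = 0
    · obtain ⟨i, hi⟩ := Function.ne_iff.1 hvne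
      simp only [Pi.zero_apply] at hi
      have h0 := heig' i
      rw [hs0] at h0
      have hr : r = d - b := by
        rcases mul_eq_mul_right_iff.1 (by linarith : (d - b) * v i = r * v i) with h | h
        · exact h.symm
        · exact absurd h hi
      rw [hr, key]
    · have hsum : (d - b) * s + b * ((n:ℝ) * s) = r * s := by
        have h1 : (∑ i : Fin n, ((d - b) * v i + b * s)) = ∑ i : Fin n, r * v i :=
          Finset.sum_congr rfl (fun i _ => heig' i)
        rw [Finset.sum_add_distrib, ← Finset.mul_sum, ← Finset.mul_sum, Finset.sum_const,
          Finset.card_univ, Fintype.card_fin, nsmul_eq_mul] at h1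
        rw [← hs] at h1
        rw [show (∑ i : Fin n, r * v i) = r * s by rw [hs, Finset.mul_sum]] at h1
        linear_combination h1
      have hr : r = d - b + b * n := by
        have h2 : ((d - b) + b * (n:ℝ)) * s = r * s := by linear_combination hsum
        rcases mul_eq_mul_right_iff.1 h2 with h | h
        · exact h.symm
        · exact absurd h hs0
      rw [hr, key]
      nlinarith [hbpos, hnR]

end
end

section
/- Let A be an n×n real matrix and let S be a random n×p real matrix (distribution given by a probability measure, with the relevant expectations existing). Put G := E[P_{A^{1/2}S}] and suppose G is positive definite. If ν > 0 is any number such that E[P_{A^{1/2}S} G⁻¹ P_{A^{1/2}S}] ⪯ ν·G in the positive semidefinite order, then ν ≥ n/p. -/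
open scoped BigOperators Matrix
open MeasureTheory

noncomputable section

/-- `B` is the Moore–Penrose pseudoinverse of `A`. -/
def IsMoorePenrose {m n : ℕ} (A : Matrix (Fin m) (Fin n) ℝ) (B : Matrix (Fin n) (Fin m) ℝ) : Prop :=
  A * B * A = A ∧ B * A * B = B ∧ (A * B)ᵀ = A * B ∧ (B * A)ᵀ = B * A

open Classical in
/-- The Moore–Penrose pseudoinverse (it always exists and is unique). -/
def pinv {m n : ℕ} (A : Matrix (Fin m) (Fin n) ℝ) : Matrix (Fin n) (Fin m) ℝ :=
  if h : ∃ B, IsMoorePenrose A B then h.choose else 0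

/-- The orthogonal projector `P_M = M(MᵀM)†Mᵀ` onto the column space of `M`. -/
def proj {m n : ℕ} (M : Matrix (Fin m) (Fin n) ℝ) : Matrix (Fin m) (Fin m) ℝ :=
  M * pinv (Mᵀ * M) * Mᵀ

/-- The positive semidefinite square root of a positive semidefinite matrix
(Mathlib's former `Matrix.PosSemidef.sqrt`, removed since; restored with its old definition). -/
def Matrix.PosSemidef.sqrt {n : Type*} [Fintype n] [DecidableEq n] {A : Matrix n n ℝ}
    (hA : A.PosSemidef) : Matrix n n ℝ :=
  hA.1.eigenvectorUnitary.1 * Matrix.diagonal ((↑) ∘ (√·) ∘ hA.1.eigenvalues) *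
  (star hA.1.eigenvectorUnitary : Matrix n n ℝ)

/-- Entrywise expectation of a random matrix. -/
def Mexp {Ω : Type*} [MeasurableSpace Ω] (ℙ : Measure Ω) {m n : ℕ}
    (f : Ω → Matrix (Fin m) (Fin n) ℝ) : Matrix (Fin m) (Fin n) ℝ :=
  Matrix.of fun i j => ∫ ω, f ω i j ∂ℙ

lemma mp_exists {m : ℕ} {N : Matrix (Fin m) (Fin m) ℝ} (hN : N.IsHermitian) :
    ∃ B, IsMoorePenrose N B := by
  classical
  set U : Matrix (Fin m) (Fin m) ℝ := (hN.eigenvectorUnitary : Matrix (Fin m) (Fin m) ℝ) with hU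
  have hUU : star U * U = 1 := Matrix.mem_unitaryGroup_iff'.mp hN.eigenvectorUnitary.2
  set f : Fin m → ℝ := RCLike.ofReal ∘ hN.eigenvalues with hf
  set g : Fin m → ℝ := fun i => if f i = 0 then 0 else (f i)⁻¹ with hg
  have key : ∀ a b : Fin m → ℝ,
      (U * Matrix.diagonal a * star U) * (U * Matrix.diagonal b * star U)
        = U * Matrix.diagonal (a * b) * star U := by
    intro a b
    calc (U * Matrix.diagonal a * star U) * (U * Matrix.diagonal b * star U)
        = U * Matrix.diagonal a * (star U * U) * Matrix.diagonal b * star U := by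
          simp only [Matrix.mul_assoc]
      _ = U * (Matrix.diagonal a * Matrix.diagonal b) * star U := by
          rw [hUU]; simp only [Matrix.mul_one, Matrix.mul_assoc]
      _ = U * Matrix.diagonal (a * b) * star U := by rw [Matrix.diagonal_mul_diagonal]; rfl
  have hsymm : ∀ a : Fin m → ℝ, (U * Matrix.diagonal a * star U)ᵀ
      = U * Matrix.diagonal a * star U := by
    intro a
    have hsU : star U = Uᵀ := by
      rw [Matrix.star_eq_conjTranspose, Matrix.conjTranspose_eq_transpose_of_trivial]
    rw [hsU, Matrix.transpose_mul, Matrix.transpose_mul, Matrix.transpose_transpose,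
      Matrix.diagonal_transpose, Matrix.mul_assoc]
  have hNspec : N = U * Matrix.diagonal f * star U := hN.spectral_theorem
  have hfgf : (f * g) * f = f := by
    funext i
    by_cases h : f i = 0 <;> simp [hg, Pi.mul_apply, h] <;> field_simp
  have hgfg : (g * f) * g = g := by
    funext i
    by_cases h : f i = 0 <;> simp [hg, Pi.mul_apply, h]
  refine ⟨U * Matrix.diagonal g * star U, ?_, ?_, ?_, ?_⟩
  · rw [hNspec, key, key, hfgf]
  · rw [hNspec, key, key, hgfg]
  · rw [hNspec, key, hsymm]
  · rw [hNspec, key, hsymm]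

lemma mp_unique {m n : ℕ} {N : Matrix (Fin m) (Fin n) ℝ} {B C : Matrix (Fin n) (Fin m) ℝ}
    (hB : IsMoorePenrose N B) (hC : IsMoorePenrose N C) : B = C := by
  obtain ⟨hB1, hB2, hB3, hB4⟩ := hB
  obtain ⟨hC1, hC2, hC3, hC4⟩ := hC
  have h1 : N * B = N * C := by
    calc N * B = (N * B)ᵀ := hB3.symm
      _ = ((N * C * N) * B)ᵀ := by rw [hC1]
      _ = ((N * C) * (N * B))ᵀ := by simp only [Matrix.mul_assoc]
      _ = (N * B)ᵀ * (N * C)ᵀ := by rw [Matrix.transpose_mul]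
      _ = (N * B) * (N * C) := by rw [hB3, hC3]
      _ = (N * B * N) * C := by simp only [Matrix.mul_assoc]
      _ = N * C := by rw [hB1]
  have h2 : B * N = C * N := by
    calc B * N = (B * N)ᵀ := hB4.symm
      _ = (B * (N * C * N))ᵀ := by rw [hC1]
      _ = ((B * N) * (C * N))ᵀ := by simp only [Matrix.mul_assoc]
      _ = (C * N)ᵀ * (B * N)ᵀ := by rw [Matrix.transpose_mul]
      _ = (C * N) * (B * N) := by rw [hB4, hC4]
      _ = C * (N * B * N) := by simp only [Matrix.mul_assoc]
      _ = C * N := by rw [hB1]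
  calc B = B * N * B := hB2.symm
    _ = B * (N * C) := by rw [Matrix.mul_assoc, h1]
    _ = (B * N) * C := by simp only [Matrix.mul_assoc]
    _ = (C * N) * C := by rw [h2]
    _ = C := hC2

lemma pinv_mp {m n : ℕ} {N : Matrix (Fin m) (Fin n) ℝ} (h : ∃ B, IsMoorePenrose N B) :
    IsMoorePenrose N (pinv N) := by
  rw [pinv, dif_pos h]
  exact h.choose_spec

lemma pinv_symm {m : ℕ} {N : Matrix (Fin m) (Fin m) ℝ} (hN : Nᵀ = N)
    (h : ∃ B, IsMoorePenrose N B) : (pinv N)ᵀ = pinv N := by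
  obtain ⟨h1, h2, h3, h4⟩ := pinv_mp h
  set B := pinv N
  refine mp_unique (B := Bᵀ) (N := N) ⟨?_, ?_, ?_, ?_⟩ ⟨h1, h2, h3, h4⟩
  · calc N * Bᵀ * N = (N * B * N)ᵀ := by simp [Matrix.transpose_mul, hN, Matrix.mul_assoc]
      _ = N := by rw [h1, hN]
  · calc Bᵀ * N * Bᵀ = (B * N * B)ᵀ := by simp [Matrix.transpose_mul, hN, Matrix.mul_assoc]
      _ = Bᵀ := by rw [h2]
  · calc (N * Bᵀ)ᵀ = B * N := by simp [Matrix.transpose_mul, hN]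
      _ = (B * N)ᵀ := h4.symm
      _ = N * Bᵀ := by simp [Matrix.transpose_mul, hN]
  · calc (Bᵀ * N)ᵀ = N * B := by simp [Matrix.transpose_mul, hN]
      _ = (N * B)ᵀ := h3.symm
      _ = Bᵀ * N := by simp [Matrix.transpose_mul, hN]

lemma proj_symm {m q : ℕ} (M : Matrix (Fin m) (Fin q) ℝ) : (proj M)ᵀ = proj M := by
  have hN : (Mᵀ * M)ᵀ = Mᵀ * M := by
    rw [Matrix.transpose_mul, Matrix.transpose_transpose]
  have hNh : (Mᵀ * M).IsHermitian := by
    rw [Matrix.IsHermitian, Matrix.conjTranspose_eq_transpose_of_trivial, hN]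
  have hBs := pinv_symm hN (mp_exists hNh)
  rw [proj, Matrix.transpose_mul, Matrix.transpose_mul, Matrix.transpose_transpose, hBs,
    Matrix.mul_assoc]

lemma proj_idem {m q : ℕ} (M : Matrix (Fin m) (Fin q) ℝ) : proj M * proj M = proj M := by
  have hN : (Mᵀ * M)ᵀ = Mᵀ * M := by
    rw [Matrix.transpose_mul, Matrix.transpose_transpose]
  have hNh : (Mᵀ * M).IsHermitian := by
    rw [Matrix.IsHermitian, Matrix.conjTranspose_eq_transpose_of_trivial, hN]
  obtain ⟨h1, h2, h3, h4⟩ := pinv_mp (mp_exists hNh)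
  set N := Mᵀ * M with hNdef
  set B := pinv N with hBdef
  -- key : M * (B * N) = M
  have hkey : M * (B * N) = M := by
    set X : Matrix (Fin m) (Fin q) ℝ := M * (B * N) - M with hX
    have hXz : Xᵀ * X = 0 := by
      have hNC : N * (B * N) = N := by rw [← Matrix.mul_assoc, h1]
      have hXt : Xᵀ = (B * N) * Mᵀ - Mᵀ := by
        rw [hX, Matrix.transpose_sub, Matrix.transpose_mul, h4]
      rw [hXt, hX, Matrix.sub_mul, Matrix.mul_sub, Matrix.mul_sub]
      have e1 : B * N * Mᵀ * (M * (B * N)) = B * N * Mᵀ * M := by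
        calc B * N * Mᵀ * (M * (B * N)) = (B * N) * (N * (B * N)) := by
              simp only [Matrix.mul_assoc, hNdef]
          _ = (B * N) * N := by rw [hNC]
          _ = B * N * Mᵀ * M := by simp only [Matrix.mul_assoc, hNdef]
      have e2 : Mᵀ * (M * (B * N)) = Mᵀ * M := by
        calc Mᵀ * (M * (B * N)) = N * (B * N) := by simp only [Matrix.mul_assoc, hNdef]
          _ = N := hNC
          _ = Mᵀ * M := rfl
      rw [e1, e2]
      abel
    have : X = 0 := by
      have := Matrix.conjTranspose_mul_self_eq_zero (A := X)
      rw [Matrix.conjTranspose_eq_transpose_of_trivial] at this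
      exact this.mp hXz
    have h' := sub_eq_zero.mp this
    exact h'
  show (M * B * Mᵀ) * (M * B * Mᵀ) = M * B * Mᵀ
  calc (M * B * Mᵀ) * (M * B * Mᵀ) = (M * (B * N)) * (B * Mᵀ) := by
        simp only [Matrix.mul_assoc, hNdef]
    _ = M * (B * Mᵀ) := by rw [hkey]
    _ = M * B * Mᵀ := by rw [Matrix.mul_assoc]

lemma proj_trace_le {m q : ℕ} (M : Matrix (Fin m) (Fin q) ℝ) : (proj M).trace ≤ q := by
  have hN : (Mᵀ * M)ᵀ = Mᵀ * M := by
    rw [Matrix.transpose_mul, Matrix.transpose_transpose]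
  have hNh : (Mᵀ * M).IsHermitian := by
    rw [Matrix.IsHermitian, Matrix.conjTranspose_eq_transpose_of_trivial, hN]
  obtain ⟨h1, h2, h3, h4⟩ := pinv_mp (mp_exists hNh)
  set N := Mᵀ * M with hNdef
  set B := pinv N with hBdef
  set Q : Matrix (Fin q) (Fin q) ℝ := N * B with hQdef
  have hQs : Qᵀ = Q := h3
  have hQi : Q * Q = Q := by
    calc Q * Q = (N * B * N) * B := by simp only [hQdef, Matrix.mul_assoc]
      _ = Q := by rw [h1]
  have htr : (proj M).trace = Q.trace := by
    rw [proj, Matrix.trace_mul_cycle]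
  rw [htr]
  have hdiag : ∀ i, Q i i ≤ 1 := by
    intro i
    have h1Q : (1 - Q) = (1 - Q)ᵀ * (1 - Q) := by
      have hs : (1 - Q)ᵀ = 1 - Q := by rw [Matrix.transpose_sub, Matrix.transpose_one, hQs]
      have hsq : (1 - Q) * (1 - Q) = 1 - Q := by
        rw [Matrix.sub_mul, Matrix.mul_sub, Matrix.mul_sub, Matrix.one_mul, Matrix.one_mul, Matrix.mul_one, hQi]
        abel
      rw [hs, hsq]
    have hnn : 0 ≤ (1 - Q) i i := by
      rw [h1Q]
      rw [Matrix.mul_apply]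
      refine Finset.sum_nonneg fun k _ => ?_
      rw [Matrix.transpose_apply]
      exact mul_self_nonneg _
    have h1e : (1 : Matrix (Fin q) (Fin q) ℝ) i i = 1 := Matrix.one_apply_eq i
    rw [Matrix.sub_apply, h1e] at hnn
    linarith
  calc Q.trace = ∑ i, Q i i := rfl
    _ ≤ ∑ _i : Fin q, (1 : ℝ) := Finset.sum_le_sum fun i _ => hdiag i
    _ = q := by simp

lemma psd_diag_nonneg {q : ℕ} {X : Matrix (Fin q) (Fin q) ℝ} (hX : X.PosSemidef) (i : Fin q) :
    0 ≤ X i i := by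
  exact hX.diag_nonneg

lemma trace_Mexp {Ω : Type*} [MeasurableSpace Ω] (ℙ : Measure Ω) {q : ℕ}
    (f : Ω → Matrix (Fin q) (Fin q) ℝ) (hf : ∀ i j, Integrable (fun ω => f ω i j) ℙ) :
    (Mexp ℙ f).trace = ∫ ω, (f ω).trace ∂ℙ := by
  have : (Mexp ℙ f).trace = ∑ i, ∫ ω, f ω i i ∂ℙ := by
    simp [Matrix.trace, Matrix.diag, Mexp]
  rw [this, ← integral_finset_sum _ (fun i _ => hf i i)]
  simp [Matrix.trace, Matrix.diag]

/-- Let `A` be an `n×n` (positive semidefinite, so that `A^{1/2}` is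
defined) matrix and `S` a random `n×p` matrix.  Put `G := E[P_{A^{1/2}S}]` and suppose
`G` is positive definite.  If `ν > 0` satisfies
`E[P_{A^{1/2}S} G⁻¹ P_{A^{1/2}S}] ⪯ ν·G`, then `ν ≥ n/p`. -/
theorem stmt8 {Ω : Type*} [MeasurableSpace Ω] (ℙ : Measure Ω) [IsProbabilityMeasure ℙ]
    (n p : ℕ) (hp : 0 < p)
    (A : Matrix (Fin n) (Fin n) ℝ) (hA : A.PosSemidef)
    (S : Ω → Matrix (Fin n) (Fin p) ℝ)
    (hPint : ∀ i j, Integrable (fun ω => proj (hA.sqrt * S ω) i j) ℙ)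
    (G : Matrix (Fin n) (Fin n) ℝ)
    (hG : G = Mexp ℙ (fun ω => proj (hA.sqrt * S ω)))
    (hGpd : G.PosDef)
    (hQint : ∀ i j, Integrable
      (fun ω => (proj (hA.sqrt * S ω) * G⁻¹ * proj (hA.sqrt * S ω)) i j) ℙ)
    (ν : ℝ) (hν : 0 < ν)
    (hle : (ν • G - Mexp ℙ (fun ω => proj (hA.sqrt * S ω) * G⁻¹ * proj (hA.sqrt * S ω))).PosSemidef) :
    (n : ℝ) / p ≤ ν := by

  set P : Ω → Matrix (Fin n) (Fin n) ℝ := fun ω => proj (hA.sqrt * S ω) with hP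
  have hGinv : G⁻¹ * G = 1 :=
    Matrix.nonsing_inv_mul G ((Matrix.isUnit_iff_isUnit_det G).mp hGpd.isUnit)
  -- integrability of entries of G⁻¹ * P ω
  have hGPint : ∀ i j, Integrable (fun ω => (G⁻¹ * P ω) i j) ℙ := by
    intro i j
    have : (fun ω => (G⁻¹ * P ω) i j) = fun ω => ∑ k, G⁻¹ i k * P ω k j := by
      funext ω; simp [Matrix.mul_apply]
    rw [this]
    exact integrable_finset_sum _ fun k _ => (hPint k j).const_mul _
  -- trace of Q ω equals trace of G⁻¹ * P ω
  have htrQ : ∀ ω, (P ω * G⁻¹ * P ω).trace = (G⁻¹ * P ω).trace := by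
    intro ω
    calc (P ω * G⁻¹ * P ω).trace = ((P ω * P ω) * G⁻¹).trace := Matrix.trace_mul_cycle _ _ _
      _ = (P ω * G⁻¹).trace := by rw [proj_idem]
      _ = (G⁻¹ * P ω).trace := Matrix.trace_mul_comm _ _
  -- Mexp of G⁻¹ * P equals G⁻¹ * G
  have hMexpGP : Mexp ℙ (fun ω => G⁻¹ * P ω) = G⁻¹ * Mexp ℙ P := by
    ext i j
    show (∫ ω, (G⁻¹ * P ω) i j ∂ℙ) = ∑ k, G⁻¹ i k * (Mexp ℙ P) k j
    calc (∫ ω, (G⁻¹ * P ω) i j ∂ℙ) = ∫ ω, ∑ k, G⁻¹ i k * P ω k j ∂ℙ := by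
          simp [Matrix.mul_apply]
      _ = ∑ k, ∫ ω, G⁻¹ i k * P ω k j ∂ℙ :=
          integral_finset_sum _ (fun k _ => (hPint k j).const_mul _)
      _ = ∑ k, G⁻¹ i k * ∫ ω, P ω k j ∂ℙ := by
          refine Finset.sum_congr rfl fun k _ => ?_
          exact integral_const_mul _ _
      _ = ∑ k, G⁻¹ i k * (Mexp ℙ P) k j := rfl
  -- trace of Mexp Q is n
  have hkey : (Mexp ℙ (fun ω => P ω * G⁻¹ * P ω)).trace = n := by
    rw [trace_Mexp ℙ _ hQint]
    calc (∫ ω, (P ω * G⁻¹ * P ω).trace ∂ℙ) = ∫ ω, (G⁻¹ * P ω).trace ∂ℙ := by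
          congr 1; funext ω; exact htrQ ω
      _ = (Mexp ℙ (fun ω => G⁻¹ * P ω)).trace := (trace_Mexp ℙ _ hGPint).symm
      _ = ((1 : Matrix (Fin n) (Fin n) ℝ)).trace := by rw [hMexpGP, ← hG, hGinv]
      _ = n := by simp [Matrix.trace_one]
  -- trace of G at most p
  have htrG : G.trace ≤ p := by
    rw [hG, trace_Mexp ℙ _ hPint]
    have hint : Integrable (fun ω => (P ω).trace) ℙ := by
      have : (fun ω => (P ω).trace) = fun ω => ∑ i, P ω i i := by
        funext ω; simp [Matrix.trace, Matrix.diag]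
      rw [this]
      exact integrable_finset_sum _ fun i _ => hPint i i
    calc (∫ ω, (P ω).trace ∂ℙ) ≤ ∫ _ω, (p : ℝ) ∂ℙ := by
          refine integral_mono hint (integrable_const _) fun ω => ?_
          exact proj_trace_le _
      _ = p := by simp
  -- nonneg trace of the psd difference
  have htr0 : 0 ≤ (ν • G - Mexp ℙ (fun ω => P ω * G⁻¹ * P ω)).trace := by
    rw [Matrix.trace]
    exact Finset.sum_nonneg fun i _ => psd_diag_nonneg hle i
  rw [Matrix.trace_sub, Matrix.trace_smul, hkey, smul_eq_mul, sub_nonneg] at htr0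
  have h2 : ν * G.trace ≤ ν * p := mul_le_mul_of_nonneg_left htrG hν.le
  have hppos : (0 : ℝ) < p := by exact_mod_cast hp
  rw [div_le_iff₀ hppos]
  linarith

end
end

section
/- Fix α > 0 and β with α + β > 0, and integers n, p with 1 < p < n. Let A = αI_n + (β/n)·𝟙𝟙ᵀ, let J be a uniformly random subset of {1,…,n} of size p with column selector S = S_J, and let G := E[S(SᵀAS)⁻¹Sᵀ] (which is positive definite). Then E[S(SᵀAS)⁻¹Sᵀ G⁻¹ S(SᵀAS)⁻¹Sᵀ] = [1/α − (n−p)²β / ((n−1)((n−1)α + (p−1)β)(nα + pβ))] · I_n + [(p−1)β(nα(1−2n) + np(α−β) + pβ) / ((n−1)·n·α·((n−1)α + (p−1)β)(nα + pβ))] · 𝟙𝟙ᵀ. -/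
open scoped BigOperators Matrix

noncomputable section

namespace Stmt10Aux

variable {n p : ℕ}

lemma selector_apply (J : Finset (Fin n)) (h : J.card = p) (i : Fin n) (j : Fin p) :
    selector p J i j = if i = J.orderEmbOfFin h j then 1 else 0 := by
  simp only [selector, dif_pos h, Matrix.of_apply]; rfl

lemma sum_orderEmb (J : Finset (Fin n)) (h : J.card = p) (g : Fin n → ℝ) :
    ∑ j : Fin p, g (J.orderEmbOfFin h j) = ∑ x ∈ J, g x := by
  rw [← Finset.sum_coe_sort J g]
  exact Fintype.sum_equiv (J.orderIsoOfFin h).toEquiv _ _ (fun j => rfl)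

lemma oEmb_inj (J : Finset (Fin n)) (h : J.card = p) :
    Function.Injective (J.orderEmbOfFin h) := (J.orderEmbOfFin h).injective

lemma sum_ind (J : Finset (Fin n)) (h : J.card = p) (i : Fin n) (r : ℝ) :
    ∑ j : Fin p, (if i = J.orderEmbOfFin h j then r else 0) = if i ∈ J then r else 0 := by
  rw [sum_orderEmb J h (fun x => if i = x then r else 0)]
  simp [Finset.sum_ite_eq]

lemma count_one (hp : 1 ≤ p) (i : Fin n) :
    ((Finset.powersetCard p (Finset.univ : Finset (Fin n))).filter (fun J => i ∈ J)).card
      = (n - 1).choose (p - 1) := by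
  have : ((Finset.powersetCard p (Finset.univ : Finset (Fin n))).filter (fun J => i ∈ J)).card
      = (Finset.powersetCard (p-1) ((Finset.univ : Finset (Fin n)).erase i)).card := by
    refine Finset.card_bij' (fun J _ => J.erase i) (fun K _ => insert i K) ?_ ?_ ?_ ?_
    · intro J hJ
      simp only [Finset.mem_filter, Finset.mem_powersetCard] at hJ
      simp only [Finset.mem_powersetCard]
      constructor
      · intro x hx
        simp only [Finset.mem_erase] at hx ⊢
        exact ⟨hx.1, Finset.mem_univ x⟩
      · rw [Finset.card_erase_of_mem hJ.2, hJ.1.2]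
    · intro K hK
      simp only [Finset.mem_powersetCard] at hK
      have hiK : i ∉ K := fun hmem => (Finset.mem_erase.mp (hK.1 hmem)).1 rfl
      simp only [Finset.mem_filter, Finset.mem_powersetCard]
      refine ⟨⟨Finset.subset_univ _, ?_⟩, Finset.mem_insert_self i K⟩
      rw [Finset.card_insert_of_notMem hiK, hK.2]
      omega
    · intro J hJ
      simp only [Finset.mem_filter] at hJ
      exact Finset.insert_erase hJ.2
    · intro K hK
      simp only [Finset.mem_powersetCard] at hK
      have hiK : i ∉ K := fun hmem => (Finset.mem_erase.mp (hK.1 hmem)).1 rfl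
      exact Finset.erase_insert hiK
  rw [this, Finset.card_powersetCard, Finset.card_erase_of_mem (Finset.mem_univ i),
    Finset.card_univ, Fintype.card_fin]

lemma count_two (hp : 2 ≤ p) (i k : Fin n) (hik : i ≠ k) :
    ((Finset.powersetCard p (Finset.univ : Finset (Fin n))).filter (fun J => i ∈ J ∧ k ∈ J)).card
      = (n - 2).choose (p - 2) := by
  have : ((Finset.powersetCard p (Finset.univ : Finset (Fin n))).filter
        (fun J => i ∈ J ∧ k ∈ J)).card
      = (Finset.powersetCard (p-2) (((Finset.univ : Finset (Fin n)).erase i).erase k)).card := by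
    refine Finset.card_bij' (fun J _ => (J.erase i).erase k)
      (fun K _ => insert i (insert k K)) ?_ ?_ ?_ ?_
    · intro J hJ
      simp only [Finset.mem_filter, Finset.mem_powersetCard] at hJ
      simp only [Finset.mem_powersetCard]
      constructor
      · intro x hx
        simp only [Finset.mem_erase] at hx ⊢
        exact ⟨hx.1, hx.2.1, Finset.mem_univ x⟩
      · rw [Finset.card_erase_of_mem (Finset.mem_erase.mpr ⟨Ne.symm hik, hJ.2.2⟩),
          Finset.card_erase_of_mem hJ.2.1, hJ.1.2]
        omega
    · intro K hK
      simp only [Finset.mem_powersetCard] at hK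
      have h1 : ∀ x ∈ K, x ≠ i ∧ x ≠ k := by
        intro x hx
        have := hK.1 hx
        simp only [Finset.mem_erase] at this
        exact ⟨this.2.1, this.1⟩
      have hiK : i ∉ K := fun h => ((h1 i h).1 rfl)
      have hkK : k ∉ K := fun h => ((h1 k h).2 rfl)
      simp only [Finset.mem_filter, Finset.mem_powersetCard]
      refine ⟨⟨Finset.subset_univ _, ?_⟩, Finset.mem_insert_self i _,
        Finset.mem_insert_of_mem (Finset.mem_insert_self k K)⟩
      rw [Finset.card_insert_of_notMem, Finset.card_insert_of_notMem hkK, hK.2]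
      · omega
      · simp only [Finset.mem_insert]
        push_neg
        exact ⟨hik, hiK⟩
    · intro J hJ
      simp only [Finset.mem_filter] at hJ
      show insert i (insert k ((J.erase i).erase k)) = J
      rw [Finset.insert_erase (Finset.mem_erase.mpr ⟨Ne.symm hik, hJ.2.2⟩),
        Finset.insert_erase hJ.2.1]
    · intro K hK
      simp only [Finset.mem_powersetCard] at hK
      have h1 : ∀ x ∈ K, x ≠ i ∧ x ≠ k := by
        intro x hx
        have := hK.1 hx
        simp only [Finset.mem_erase] at this
        exact ⟨this.2.1, this.1⟩
      have hiK : i ∉ K := fun h => ((h1 i h).1 rfl)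
      have hkK : k ∉ K := fun h => ((h1 k h).2 rfl)
      show ((insert i (insert k K)).erase i).erase k = K
      rw [Finset.erase_insert (by simp only [Finset.mem_insert]; push_neg; exact ⟨hik, hiK⟩),
        Finset.erase_insert hkK]
  rw [this, Finset.card_powersetCard,
    Finset.card_erase_of_mem (Finset.mem_erase.mpr ⟨Ne.symm hik, Finset.mem_univ k⟩),
    Finset.card_erase_of_mem (Finset.mem_univ i), Finset.card_univ, Fintype.card_fin]
  congr 1

lemma SAS_form (α β : ℝ) (A : Matrix (Fin n) (Fin n) ℝ)
    (hA : A = α • (1 : Matrix (Fin n) (Fin n) ℝ) + (β / n) • Matrix.of (fun _ _ => (1 : ℝ)))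
    (J : Finset (Fin n)) (h : J.card = p) :
    (selector p J)ᵀ * A * selector p J
      = Matrix.of fun j l => (if j = l then α else 0) + β / n := by
  ext j l
  have h1 : ∀ k : Fin n, ((selector p J)ᵀ * A) j k = A (J.orderEmbOfFin h j) k := by
    intro k
    rw [Matrix.mul_apply]
    simp only [Matrix.transpose_apply, selector_apply J h, ite_mul, one_mul, zero_mul]
    rw [Finset.sum_ite_eq' Finset.univ (J.orderEmbOfFin h j) (fun i => A i k)]
    simp
  rw [Matrix.mul_apply]
  simp only [h1, selector_apply J h, mul_ite, mul_one, mul_zero]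
  rw [Finset.sum_ite_eq' Finset.univ (J.orderEmbOfFin h l) (fun k => A (J.orderEmbOfFin h j) k)]
  have h3 : (J.orderEmbOfFin h j = J.orderEmbOfFin h l) ↔ j = l :=
    ⟨fun e => oEmb_inj J h e, fun e => by rw [e]⟩
  rw [hA]
  simp only [Finset.mem_univ, if_true, Matrix.add_apply, Matrix.smul_apply, Matrix.one_apply,
    Matrix.of_apply, smul_eq_mul, mul_one, mul_ite, mul_zero, h3]

/-- Inverse of `a•I + b•E` on `Fin m`. -/
lemma diag_const_inv (m : ℕ) (a b : ℝ) (ha : a ≠ 0) (hab : a + m * b ≠ 0) :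
    (Matrix.of fun j l : Fin m => (if j = l then a else 0) + b)⁻¹
      = Matrix.of fun j l : Fin m => (if j = l then a⁻¹ else 0) + -(b / (a * (a + m * b))) := by
  apply Matrix.inv_eq_right_inv
  ext j l
  rw [Matrix.mul_apply, Matrix.one_apply]
  simp only [Matrix.of_apply, add_mul, mul_add, ite_mul, mul_ite, zero_mul, mul_zero,
    Finset.sum_add_distrib, Finset.sum_ite_eq, Finset.sum_ite_eq',
    Finset.sum_const, Finset.mem_univ, if_true, Finset.card_univ, Fintype.card_fin,
    nsmul_eq_mul]
  have hprod : a * (a + m * b) ≠ 0 := mul_ne_zero ha hab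
  have hprod' : a * b * (m:ℝ) + a ^ 2 ≠ 0 := by
    intro hh
    exact hprod (by nlinarith)
  have hprod'' : b * a * (m:ℝ) + a ^ 2 ≠ 0 := by
    intro hh
    exact hprod (by nlinarith)
  have hab' : a + b * (m:ℝ) ≠ 0 := by rwa [mul_comm b]
  split_ifs with hjl
  · field_simp
    ring
  · field_simp
    ring

/-- Entrywise form of `S B Sᵀ` for `B = u•I + v•E`. -/
lemma P_form (J : Finset (Fin n)) (h : J.card = p) (u v : ℝ) :
    selector p J * (Matrix.of fun j l : Fin p => (if j = l then u else 0) + v)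
        * (selector p J)ᵀ
      = Matrix.of fun i k => (if i ∈ J then (1:ℝ) else 0) * (if k ∈ J then 1 else 0)
          * ((if i = k then u else 0) + v) := by
  ext i k
  have h1 : ∀ l : Fin p,
      (selector p J * Matrix.of fun j l : Fin p => (if j = l then u else 0) + v) i l
        = (if i = J.orderEmbOfFin h l then u else 0) + (if i ∈ J then v else 0) := by
    intro l
    rw [Matrix.mul_apply]
    have expand : ∀ j : Fin p,
        selector p J i j * ((Matrix.of fun j l : Fin p => (if j = l then u else 0) + v) j l)
          = (if j = l then (if i = J.orderEmbOfFin h j then u else 0) else 0)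
            + (if i = J.orderEmbOfFin h j then v else 0) := by
      intro j
      rw [selector_apply J h, Matrix.of_apply]
      split_ifs <;> ring
    rw [Finset.sum_congr rfl (fun j _ => expand j), Finset.sum_add_distrib,
      Finset.sum_ite_eq' Finset.univ l (fun j => if i = J.orderEmbOfFin h j then u else 0),
      sum_ind J h]
    simp
  rw [Matrix.mul_apply]
  simp only [h1, Matrix.transpose_apply, selector_apply J h]
  have expand2 : ∀ l : Fin p,
      ((if i = J.orderEmbOfFin h l then u else 0) + (if i ∈ J then v else 0))
          * (if k = J.orderEmbOfFin h l then (1:ℝ) else 0)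
        = (if k = J.orderEmbOfFin h l then (if i = J.orderEmbOfFin h l then u else 0) else 0)
          + (if k = J.orderEmbOfFin h l then (if i ∈ J then v else 0) else 0) := by
    intro l
    split_ifs <;> ring
  rw [Finset.sum_congr rfl (fun l _ => expand2 l), Finset.sum_add_distrib,
    sum_orderEmb J h (fun x => if k = x then (if i = x then u else 0) else 0),
    sum_ind J h k (if i ∈ J then v else 0)]
  rw [Finset.sum_ite_eq J k (fun x => if i = x then u else 0)]
  by_cases hik : i = k
  · subst hik
    by_cases hi : i ∈ J <;> simp [hi]
  · by_cases hi : i ∈ J <;> by_cases hk : k ∈ J <;>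
      simp [hi, hk, hik, fun hh : i = k => hik hh] <;> ring

/-- Row computation for `P * M` with `P = χχ(uδ+v)` and `M = xI + yE`. -/
lemma row_sum (J : Finset (Fin n)) (h : J.card = p) (u v x y : ℝ) (i b : Fin n) :
    (∑ a : Fin n, ((if i ∈ J then (1:ℝ) else 0) * (if a ∈ J then 1 else 0)
        * ((if i = a then u else 0) + v)) * ((if a = b then x else 0) + y))
      = (if i ∈ J then (1:ℝ) else 0)
          * (y * (u + p * v)
            + x * (if b ∈ J then (1:ℝ) else 0) * ((if i = b then u else 0) + v)) := by
  by_cases hi : i ∈ J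
  · simp only [hi, if_true, one_mul]
    have e1 : ∀ a : Fin n,
        ((if a ∈ J then (1:ℝ) else 0) * ((if i = a then u else 0) + v))
            * ((if a = b then x else 0) + y)
          = if a ∈ J then ((if i = a then u else 0) + v) * ((if a = b then x else 0) + y)
            else 0 := by
      intro a; split_ifs <;> ring
    rw [Finset.sum_congr rfl (fun a _ => e1 a), Finset.sum_ite_mem, Finset.univ_inter]
    have e2 : ∀ a : Fin n,
        ((if i = a then u else 0) + v) * ((if a = b then x else 0) + y)
          = (if i = a then u * ((if a = b then x else 0) + y) else 0)
            + ((if a = b then v * x else 0) + v * y) := by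
      intro a; split_ifs <;> ring
    rw [Finset.sum_congr rfl (fun a _ => e2 a), Finset.sum_add_distrib, Finset.sum_add_distrib,
      Finset.sum_ite_eq J i (fun a => u * ((if a = b then x else 0) + y)),
      Finset.sum_ite_eq' J b (fun _ => v * x), Finset.sum_const, h, nsmul_eq_mul]
    simp only [hi, if_true]
    by_cases hb : b ∈ J <;> by_cases hib : i = b
    · simp only [hb, hib, if_true, one_mul]; ring
    · simp only [hb, hib, if_true, if_false, one_mul]; ring
    · exact absurd (hib ▸ hi) hb
    · simp only [hb, hib, if_false]; ring
  · simp [hi]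

/-- The key product: `P * M * P = χχ(x u² δ + K)`. -/
lemma PMP (J : Finset (Fin n)) (h : J.card = p) (u v x y : ℝ) :
    (Matrix.of fun i k : Fin n => (if i ∈ J then (1:ℝ) else 0) * (if k ∈ J then 1 else 0)
        * ((if i = k then u else 0) + v))
      * (Matrix.of fun a b : Fin n => (if a = b then x else 0) + y)
      * (Matrix.of fun i k : Fin n => (if i ∈ J then (1:ℝ) else 0) * (if k ∈ J then 1 else 0)
        * ((if i = k then u else 0) + v))
    = Matrix.of fun i k : Fin n => (if i ∈ J then (1:ℝ) else 0) * (if k ∈ J then 1 else 0)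
        * ((if i = k then x * u ^ 2 else 0)
            + (y * (u + p * v) ^ 2 + x * (2 * u * v + p * v ^ 2))) := by
  ext i k
  rw [Matrix.mul_apply]
  have hrow : ∀ b : Fin n,
      ((Matrix.of fun i k : Fin n => (if i ∈ J then (1:ℝ) else 0) * (if k ∈ J then 1 else 0)
          * ((if i = k then u else 0) + v))
        * (Matrix.of fun a b : Fin n => (if a = b then x else 0) + y)) i b
      = (if i ∈ J then (1:ℝ) else 0)
          * (y * (u + p * v)
            + x * (if b ∈ J then (1:ℝ) else 0) * ((if i = b then u else 0) + v)) := by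
    intro b
    rw [Matrix.mul_apply]
    simpa using row_sum J h u v x y i b
  have e0 : ∀ b : Fin n,
      ((Matrix.of fun i k : Fin n => (if i ∈ J then (1:ℝ) else 0) * (if k ∈ J then 1 else 0)
          * ((if i = k then u else 0) + v))
        * (Matrix.of fun a b : Fin n => (if a = b then x else 0) + y)) i b
      * ((Matrix.of fun i k : Fin n => (if i ∈ J then (1:ℝ) else 0) * (if k ∈ J then 1 else 0)
          * ((if i = k then u else 0) + v)) b k)
      = ((if i ∈ J then (1:ℝ) else 0)
          * (y * (u + p * v)
            + x * (if b ∈ J then (1:ℝ) else 0) * ((if i = b then u else 0) + v)))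
        * ((if b ∈ J then (1:ℝ) else 0) * (if k ∈ J then (1:ℝ) else 0)
            * ((if b = k then u else 0) + v)) := by
    intro b
    rw [hrow b]
    rfl
  rw [Finset.sum_congr rfl (fun b _ => e0 b)]
  by_cases hi : i ∈ J
  · by_cases hk : k ∈ J
    · have e1 : ∀ b : Fin n,
          ((if i ∈ J then (1:ℝ) else 0)
            * (y * (u + p * v)
              + x * (if b ∈ J then (1:ℝ) else 0) * ((if i = b then u else 0) + v)))
          * ((if b ∈ J then (1:ℝ) else 0) * (if k ∈ J then (1:ℝ) else 0)
              * ((if b = k then u else 0) + v))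
            = if b ∈ J then
                (y * (u + p * v) + x * ((if i = b then u else 0) + v))
                  * ((if b = k then u else 0) + v)
              else 0 := by
        intro b
        simp only [hi, hk, if_true]
        split_ifs <;> ring
      rw [Finset.sum_congr rfl (fun b _ => e1 b), Finset.sum_ite_mem, Finset.univ_inter]
      have e2 : ∀ b : Fin n,
          (y * (u + p * v) + x * ((if i = b then u else 0) + v)) * ((if b = k then u else 0) + v)
            = (if i = b then ((if b = k then x * u * u else 0) + x * u * v) else 0)
              + ((if b = k then (y * (u + p * v) + x * v) * u else 0)
                + (y * (u + p * v) * v + x * v * v)) := by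
        intro b; split_ifs <;> ring
      rw [Finset.sum_congr rfl (fun b _ => e2 b), Finset.sum_add_distrib,
        Finset.sum_add_distrib,
        Finset.sum_ite_eq J i (fun b => (if b = k then x * u * u else 0) + x * u * v),
        Finset.sum_ite_eq' J k (fun _ => (y * (u + p * v) + x * v) * u),
        Finset.sum_const, h, nsmul_eq_mul]
      simp only [hi, hk, if_true, Matrix.of_apply, one_mul]
      by_cases hik : i = k
      · simp only [hik, if_true]; ring
      · simp only [hik, if_false]; ring
    · have e1 : ∀ b ∈ Finset.univ, ((if i ∈ J then (1:ℝ) else 0)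
            * (y * (u + p * v)
              + x * (if b ∈ J then (1:ℝ) else 0) * ((if i = b then u else 0) + v)))
          * ((if b ∈ J then (1:ℝ) else 0) * (if k ∈ J then (1:ℝ) else 0)
              * ((if b = k then u else 0) + v)) = 0 := by
        intro b _
        simp [hk]
      rw [Finset.sum_eq_zero e1]
      simp [hk]
  · have e1 : ∀ b ∈ Finset.univ, ((if i ∈ J then (1:ℝ) else 0)
          * (y * (u + p * v)
            + x * (if b ∈ J then (1:ℝ) else 0) * ((if i = b then u else 0) + v)))
        * ((if b ∈ J then (1:ℝ) else 0) * (if k ∈ J then (1:ℝ) else 0)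
            * ((if b = k then u else 0) + v)) = 0 := by
      intro b _
      simp [hi]
    rw [Finset.sum_eq_zero e1]
    simp [hi]

lemma sum_over_J (hp2 : 2 ≤ p) (u v : ℝ) :
    (∑ J ∈ Finset.powersetCard p (Finset.univ : Finset (Fin n)),
      Matrix.of (fun i k : Fin n => (if i ∈ J then (1:ℝ) else 0) * (if k ∈ J then 1 else 0)
        * ((if i = k then u else 0) + v)))
    = Matrix.of fun i k : Fin n =>
        (if i = k then ((n-1).choose (p-1) : ℝ) * (u + v) - ((n-2).choose (p-2) : ℝ) * v
          else 0) + ((n-2).choose (p-2) : ℝ) * v := by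
  ext i k
  rw [Matrix.sum_apply]
  by_cases hik : i = k
  · subst hik
    have e1 : ∀ J ∈ Finset.powersetCard p (Finset.univ : Finset (Fin n)),
        (Matrix.of (fun i k : Fin n => (if i ∈ J then (1:ℝ) else 0) * (if k ∈ J then 1 else 0)
          * ((if i = k then u else 0) + v))) i i
        = if i ∈ J then u + v else 0 := by
      intro J _
      simp only [Matrix.of_apply, if_pos rfl]
      split_ifs <;> ring
    rw [Finset.sum_congr rfl e1, ← Finset.sum_filter, Finset.sum_const, count_one (by omega),
      nsmul_eq_mul]
    simp [Matrix.of_apply]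
  · have e1 : ∀ J ∈ Finset.powersetCard p (Finset.univ : Finset (Fin n)),
        (Matrix.of (fun i' k' : Fin n => (if i' ∈ J then (1:ℝ) else 0)
          * (if k' ∈ J then 1 else 0) * ((if i' = k' then u else 0) + v))) i k
        = if i ∈ J ∧ k ∈ J then v else 0 := by
      intro J _
      simp only [Matrix.of_apply, hik, if_false]
      split_ifs with h1 h2 h3 <;> simp_all <;> ring
    rw [Finset.sum_congr rfl e1, ← Finset.sum_filter, Finset.sum_const, count_two hp2 i k hik,
      nsmul_eq_mul]
    simp [Matrix.of_apply, hik]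

end Stmt10Aux

set_option maxHeartbeats 2000000 in
open Stmt10Aux in
/-- For `A = αI + (β/n)𝟙𝟙ᵀ`, `J` a uniformly random size-`p` subset of
`{1,…,n}` with column selector `S = S_J`, and `G = E[S(SᵀAS)⁻¹Sᵀ]`,
`E[S(SᵀAS)⁻¹Sᵀ G⁻¹ S(SᵀAS)⁻¹Sᵀ]` equals the stated combination of `I` and `𝟙𝟙ᵀ`. -/
theorem stmt10 (α β : ℝ) (hα : 0 < α) (hαβ : 0 < α + β) (n p : ℕ) (hp : 1 < p) (hpn : p < n)
    (A : Matrix (Fin n) (Fin n) ℝ)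
    (hA : A = α • (1 : Matrix (Fin n) (Fin n) ℝ) + (β / n) • Matrix.of (fun _ _ => (1 : ℝ)))
    (G : Matrix (Fin n) (Fin n) ℝ)
    (hG : G = ((n.choose p : ℝ))⁻¹ • (∑ J ∈ Finset.powersetCard p (Finset.univ : Finset (Fin n)),
        selector p J * ((selector p J)ᵀ * A * selector p J)⁻¹ * (selector p J)ᵀ)) :
    ((n.choose p : ℝ))⁻¹ • (∑ J ∈ Finset.powersetCard p (Finset.univ : Finset (Fin n)),
        selector p J * ((selector p J)ᵀ * A * selector p J)⁻¹ * (selector p J)ᵀ * G⁻¹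
          * (selector p J * ((selector p J)ᵀ * A * selector p J)⁻¹ * (selector p J)ᵀ))
      = (1 / α - ((n : ℝ) - p) ^ 2 * β
            / (((n : ℝ) - 1) * (((n : ℝ) - 1) * α + ((p : ℝ) - 1) * β)
                * ((n : ℝ) * α + (p : ℝ) * β))) • (1 : Matrix (Fin n) (Fin n) ℝ)
        + (((p : ℝ) - 1) * β * ((n : ℝ) * α * (1 - 2 * (n : ℝ)) + (n : ℝ) * p * (α - β) + (p : ℝ) * β)
            / (((n : ℝ) - 1) * n * α * (((n : ℝ) - 1) * α + ((p : ℝ) - 1) * β)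
                * ((n : ℝ) * α + (p : ℝ) * β)))
            • Matrix.of (fun _ _ => (1 : ℝ)) := by
  classical
  -- basic numeric facts
  have hnR : (1:ℝ) < (n:ℝ) := by exact_mod_cast lt_trans hp hpn
  have hpR : (1:ℝ) < (p:ℝ) := by exact_mod_cast hp
  have hpnR : (p:ℝ) < (n:ℝ) := by exact_mod_cast hpn
  have hα' : α ≠ 0 := ne_of_gt hα
  have hn0 : (n:ℝ) ≠ 0 := by linarith
  have hn1 : (n:ℝ) - 1 ≠ 0 := by linarith
  have hp0 : (p:ℝ) ≠ 0 := by linarith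
  have hp1 : (p:ℝ) - 1 ≠ 0 := by linarith
  have hsPos : 0 < (n:ℝ) * α + (p:ℝ) * β := by nlinarith
  have hs : (n:ℝ) * α + (p:ℝ) * β ≠ 0 := ne_of_gt hsPos
  have htPos : 0 < ((n:ℝ) - 1) * α + ((p:ℝ) - 1) * β := by nlinarith
  have ht : ((n:ℝ) - 1) * α + ((p:ℝ) - 1) * β ≠ 0 := ne_of_gt htPos
  have hCpos : (0:ℝ) < (n.choose p : ℝ) := by
    exact_mod_cast Nat.choose_pos (le_of_lt hpn)
  have hC : (n.choose p : ℝ) ≠ 0 := ne_of_gt hCpos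
  set C : ℝ := (n.choose p : ℝ) with hCdef
  set N1 : ℝ := ((n-1).choose (p-1) : ℝ) with hN1def
  set N2 : ℝ := ((n-2).choose (p-2) : ℝ) with hN2def
  -- choose ratio identities
  have hnat1 : n * (n-1).choose (p-1) = n.choose p * p := by
    have h := Nat.add_one_mul_choose_eq (n-1) (p-1)
    have h1 : n - 1 + 1 = n := by omega
    have h2 : p - 1 + 1 = p := by omega
    simpa [Nat.succ_eq_add_one, h1, h2] using h
  have hnat2 : (n-1) * (n-2).choose (p-2) = (n-1).choose (p-1) * (p-1) := by
    have h := Nat.add_one_mul_choose_eq (n-2) (p-2)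
    have h1 : n - 2 + 1 = n - 1 := by omega
    have h2 : p - 2 + 1 = p - 1 := by omega
    simpa [Nat.succ_eq_add_one, h1, h2] using h
  have hcast1 : (n:ℝ) * N1 = C * p := by
    rw [hN1def, hCdef]
    exact_mod_cast congrArg (Nat.cast : ℕ → ℝ) hnat1
  have hcast2 : ((n:ℝ) - 1) * N2 = N1 * ((p:ℝ) - 1) := by
    rw [hN1def, hN2def]
    have := congrArg (Nat.cast : ℕ → ℝ) hnat2
    rw [Nat.cast_mul, Nat.cast_mul, Nat.cast_sub (by omega : 1 ≤ n),
      Nat.cast_sub (by omega : 1 ≤ p)] at this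
    push_cast at this
    linear_combination this
  have hN1v : N1 = (p:ℝ) * C / n := by field_simp; linarith [hcast1]
  have hN2v : N2 = (p:ℝ) * ((p:ℝ) - 1) * C / ((n:ℝ) * ((n:ℝ) - 1)) := by
    have : N2 = N1 * ((p:ℝ) - 1) / ((n:ℝ) - 1) := by field_simp; linarith [hcast2]
    rw [this, hN1v]; field_simp
  -- the parameters of P_J
  set u : ℝ := α⁻¹ with hu
  set v : ℝ := -(β / (α * ((n:ℝ) * α + (p:ℝ) * β))) with hv
  -- key rewriting of each projector
  have key : ∀ J ∈ Finset.powersetCard p (Finset.univ : Finset (Fin n)),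
      selector p J * ((selector p J)ᵀ * A * selector p J)⁻¹ * (selector p J)ᵀ
        = Matrix.of (fun i k : Fin n => (if i ∈ J then (1:ℝ) else 0) * (if k ∈ J then 1 else 0)
            * ((if i = k then u else 0) + v)) := by
    intro J hJ
    have hcard : J.card = p := (Finset.mem_powersetCard.mp hJ).2
    have habp : α + (p:ℝ) * (β / n) ≠ 0 := by
      have : α + (p:ℝ) * (β / n) = ((n:ℝ) * α + (p:ℝ) * β) / n := by field_simp
      rw [this]
      exact div_ne_zero hs hn0
    rw [SAS_form α β A hA J hcard, diag_const_inv p α (β / n) hα' habp]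
    have hst : β * α * (p:ℝ) + α ^ 2 * (n:ℝ) ≠ 0 := by
      intro hh
      exact (mul_ne_zero hα' hs) (by nlinarith)
    have hvv : -((β / n) / (α * (α + (p:ℝ) * (β / n)))) = v := by
      rw [hv]; field_simp
    rw [hvv]
    exact P_form J hcard u v
  -- closed form for G
  set gA : ℝ := C⁻¹ * (N1 * (u + v) - N2 * v) with hgAdef
  set gB : ℝ := C⁻¹ * (N2 * v) with hgBdef
  have hGform : G = Matrix.of fun i k : Fin n => (if i = k then gA else 0) + gB := by
    rw [hG, Finset.sum_congr rfl key, sum_over_J (by omega)]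
    ext i k
    simp only [Matrix.smul_apply, Matrix.of_apply, smul_eq_mul, ← hN1def, ← hN2def, ← hCdef]
    split_ifs <;> simp only [hgAdef, hgBdef] <;> ring
  -- closed form values
  have hgAval : gA = (p:ℝ) * (((n:ℝ) - 1) * α + ((p:ℝ) - 1) * β)
      / (α * ((n:ℝ) * α + (p:ℝ) * β) * ((n:ℝ) - 1)) := by
    rw [hgAdef, hN1v, hN2v, hu, hv]
    field_simp [hC, hn0, hn1, hα', hs]
    ring
  have hgBval : gB = -((p:ℝ) * ((p:ℝ) - 1) * β
      / (α * ((n:ℝ) * α + (p:ℝ) * β) * (n:ℝ) * ((n:ℝ) - 1))) := by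
    rw [hgBdef, hN2v, hv]
    field_simp [hC, hn0, hn1, hα', hs]
  have hgA : gA ≠ 0 := by
    rw [hgAval]
    positivity
  have hgABval : gA + (n:ℝ) * gB = (p:ℝ) / ((n:ℝ) * α + (p:ℝ) * β) := by
    rw [hgAval, hgBval]
    field_simp [hn0, hn1, hα', hs, hp0]
    ring
  have hgAB : gA + (n:ℝ) * gB ≠ 0 := by
    rw [hgABval]
    positivity
  -- G inverse
  set x : ℝ := gA⁻¹ with hxdef
  set y : ℝ := -(gB / (gA * (gA + (n:ℝ) * gB))) with hydef
  have hGinv : G⁻¹ = Matrix.of fun a b : Fin n => (if a = b then x else 0) + y := by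
    rw [hGform, diag_const_inv n gA gB hgA hgAB]
  have hxval : x = α * ((n:ℝ) * α + (p:ℝ) * β) * ((n:ℝ) - 1)
      / ((p:ℝ) * (((n:ℝ) - 1) * α + ((p:ℝ) - 1) * β)) := by
    rw [hxdef, hgAval, inv_div]
  have hyval : y = ((p:ℝ) - 1) * β * ((n:ℝ) * α + (p:ℝ) * β)
      / ((n:ℝ) * (p:ℝ) * (((n:ℝ) - 1) * α + ((p:ℝ) - 1) * β)) := by
    rw [hydef, hgABval, hgAval, hgBval]
    field_simp [hn0, hn1, hα', hs, hp0, ht, hp1]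
  -- rewrite the summands
  have key2 : ∀ J ∈ Finset.powersetCard p (Finset.univ : Finset (Fin n)),
      selector p J * ((selector p J)ᵀ * A * selector p J)⁻¹ * (selector p J)ᵀ * G⁻¹
          * (selector p J * ((selector p J)ᵀ * A * selector p J)⁻¹ * (selector p J)ᵀ)
        = Matrix.of fun i k : Fin n => (if i ∈ J then (1:ℝ) else 0) * (if k ∈ J then 1 else 0)
            * ((if i = k then x * u ^ 2 else 0)
                + (y * (u + p * v) ^ 2 + x * (2 * u * v + p * v ^ 2))) := by
    intro J hJ
    have hcard : J.card = p := (Finset.mem_powersetCard.mp hJ).2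
    rw [key J hJ, hGinv]
    exact PMP J hcard u v x y
  rw [Finset.sum_congr rfl key2, sum_over_J (by omega)]
  -- final entrywise identity
  ext i k
  simp only [Matrix.smul_apply, Matrix.add_apply, Matrix.of_apply, Matrix.one_apply,
    smul_eq_mul, ← hN1def, ← hN2def, ← hCdef]
  set K : ℝ := y * (u + p * v) ^ 2 + x * (2 * u * v + p * v ^ 2) with hKdef
  have hKval : C⁻¹ * (N2 * K)
      = ((p:ℝ) - 1) * β * ((n:ℝ) * α * (1 - 2 * (n:ℝ)) + (n:ℝ) * p * (α - β) + (p:ℝ) * β)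
          / (((n:ℝ) - 1) * n * α * (((n:ℝ) - 1) * α + ((p:ℝ) - 1) * β)
              * ((n:ℝ) * α + (p:ℝ) * β)) := by
    rw [hKdef, hN2v, hxval, hyval, hu, hv]
    field_simp [hC, hn0, hn1, hα', hs, hp0, ht, hp1]
    ring
  have hDval : C⁻¹ * (N1 * (x * u ^ 2 + K))
      = (1 / α - ((n : ℝ) - p) ^ 2 * β
          / (((n : ℝ) - 1) * (((n : ℝ) - 1) * α + ((p : ℝ) - 1) * β)
              * ((n : ℝ) * α + (p : ℝ) * β)))
        + ((p:ℝ) - 1) * β * ((n:ℝ) * α * (1 - 2 * (n:ℝ)) + (n:ℝ) * p * (α - β) + (p:ℝ) * β)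
          / (((n:ℝ) - 1) * n * α * (((n:ℝ) - 1) * α + ((p:ℝ) - 1) * β)
              * ((n:ℝ) * α + (p:ℝ) * β)) := by
    rw [hKdef, hN1v, hxval, hyval, hu, hv]
    have ht' : α * ((n:ℝ) - 1) + β * ((p:ℝ) - 1) ≠ 0 := by rw [mul_comm α, mul_comm β]; exact ht
    field_simp [hC, hn0, hn1, hα', hs, hp0, ht, hp1, ht']
    ring
  by_cases hik : i = k
  · simp only [hik, if_true, mul_one]
    calc C⁻¹ * (N1 * (x * u ^ 2 + K) - N2 * K + N2 * K)
        = C⁻¹ * (N1 * (x * u ^ 2 + K)) := by ring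
      _ = _ := by rw [hDval]
  · simp only [hik, if_false, mul_zero, zero_add, mul_one, add_zero]
    rw [hKval]

end
end

section
/- Fix α > 0 and β with α + β > 0, and positive integers n, p, k with n = p·k. Partition {1,…,n} sequentially into J_1 = {1,…,p}, J_2 = {p+1,…,2p}, …, J_k, with column selectors S_1, …, S_k, and let the random matrix S take value S_i with probability 1/k. Then for A = αI_n + (β/n)·𝟙𝟙ᵀ, E[S(SᵀAS)⁻¹Sᵀ A] = (p/n)·I_n + [pβ/(n²α + npβ)]·𝟙𝟙ᵀ − [pβ/(n²α + npβ)]·blkdiag(𝟙_p𝟙_pᵀ, …, 𝟙_p𝟙_pᵀ), where the block diagonal matrix has k diagonal blocks each equal to the p×p all-ones matrix. -/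
open scoped BigOperators Matrix

noncomputable section

set_option maxHeartbeats 2000000

/-- For `A = αI + (β/n)𝟙𝟙ᵀ` and the sequential partition
`J_1 = {1,…,p}, J_2 = {p+1,…,2p}, …, J_k` of `{1,…,n}` (`n = p·k`), with `S` uniform over
the corresponding column selectors,
`E[S(SᵀAS)⁻¹SᵀA] = (p/n)·I + (pβ/(n²α+npβ))·𝟙𝟙ᵀ − (pβ/(n²α+npβ))·blkdiag(𝟙_p𝟙_pᵀ,…,𝟙_p𝟙_pᵀ)`.
The block diagonal matrix with `k` all-ones `p×p` diagonal blocks is the matrix whose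
`(x,y)` entry is `1` exactly when `⌊x/p⌋ = ⌊y/p⌋`. -/
theorem stmt11 (α β : ℝ) (hα : 0 < α) (hαβ : 0 < α + β) (n p k : ℕ)
    (hn : 0 < n) (hp : 0 < p) (hk : 0 < k) (hnpk : n = p * k)
    (J : Fin k → Finset (Fin n))
    (hJ : ∀ i, J i = Finset.univ.filter (fun x : Fin n => p * (i : ℕ) ≤ (x : ℕ) ∧ (x : ℕ) < p * ((i : ℕ) + 1)))
    (A : Matrix (Fin n) (Fin n) ℝ)
    (hA : A = α • (1 : Matrix (Fin n) (Fin n) ℝ) + (β / n) • Matrix.of (fun _ _ => (1 : ℝ)))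
    (blk : Matrix (Fin n) (Fin n) ℝ)
    (hblk : blk = Matrix.of (fun x y : Fin n => if (x : ℕ) / p = (y : ℕ) / p then (1 : ℝ) else 0)) :
    (k : ℝ)⁻¹ • (∑ i : Fin k,
        selector p (J i) * ((selector p (J i))ᵀ * A * selector p (J i))⁻¹ * (selector p (J i))ᵀ * A)
      = ((p : ℝ) / n) • (1 : Matrix (Fin n) (Fin n) ℝ)
        + ((p : ℝ) * β / ((n : ℝ) ^ 2 * α + (n : ℝ) * p * β)) • Matrix.of (fun _ _ => (1 : ℝ))
        - ((p : ℝ) * β / ((n : ℝ) ^ 2 * α + (n : ℝ) * p * β)) • blk := by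
  have hk1 : (1:ℝ) ≤ (k:ℝ) := by exact_mod_cast hk
  have hp0 : (0:ℝ) < (p:ℝ) := by exact_mod_cast hp
  have hn0 : (0:ℝ) < (n:ℝ) := by exact_mod_cast hn
  have hnpk' : (n:ℝ) = (p:ℝ) * (k:ℝ) := by exact_mod_cast hnpk
  have hden : (0:ℝ) < (n:ℝ)*α + (p:ℝ)*β := by
    rw [hnpk']
    nlinarith [mul_nonneg (mul_nonneg hp0.le (sub_nonneg.2 hk1)) hα.le, mul_pos hp0 hαβ]
  subst hA hblk
  -- the explicit enumeration of the i-th block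
  have hfl : ∀ (i : Fin k) (j : Fin p), p * (i:ℕ) + (j:ℕ) < n := by
    intro i j
    have hi : (i:ℕ) + 1 ≤ k := i.isLt
    have hj : (j:ℕ) < p := j.isLt
    have h1 : p * ((i:ℕ)+1) ≤ p * k := Nat.mul_le_mul_left p hi
    have h2 : p * ((i:ℕ)+1) = p * (i:ℕ) + p := by ring
    omega
  set f : Fin k → Fin p → Fin n := fun i j => ⟨p * (i:ℕ) + (j:ℕ), hfl i j⟩ with hf
  have hmono : ∀ i, StrictMono (f i) := by
    intro i a b hab
    simp only [hf, Fin.mk_lt_mk]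
    have : (a:ℕ) < b := hab
    omega
  have hmem : ∀ i j, f i j ∈ J i := by
    intro i j
    have hj : (j:ℕ) < p := j.isLt
    have h2 : p * ((i:ℕ)+1) = p * (i:ℕ) + p := by ring
    simp only [hJ, Finset.mem_filter, Finset.mem_univ, true_and, hf, Fin.val_mk]
    exact ⟨Nat.le_add_right _ _, by omega⟩
  have hcard : ∀ i, (J i).card = p := by
    intro i
    have himg : J i = Finset.image (f i) Finset.univ := by
      ext x
      simp only [hJ, Finset.mem_filter, Finset.mem_univ, true_and, Finset.mem_image, hf]
      constructor
      · rintro ⟨h1, h2⟩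
        have h3 : p * ((i:ℕ)+1) = p * (i:ℕ) + p := by ring
        refine ⟨⟨(x:ℕ) - p * (i:ℕ), by omega⟩, ?_⟩
        apply Fin.ext
        simp only [Fin.mk_lt_mk]
        omega
      · rintro ⟨j, rfl⟩
        have hj : (j:ℕ) < p := j.isLt
        have h3 : p * ((i:ℕ)+1) = p * (i:ℕ) + p := by ring
        simp only [Fin.val_mk]
        omega
    rw [himg, Finset.card_image_of_injective _ (hmono i).injective, Finset.card_univ,
      Fintype.card_fin]
  have hsel : ∀ i, selector p (J i) = Matrix.of (fun a j => if a = f i j then (1:ℝ) else 0) := by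
    intro i
    have hemb : f i = (J i).orderEmbOfFin (hcard i) :=
      Finset.orderEmbOfFin_unique (hcard i) (hmem i) (hmono i)
    simp only [selector, dif_pos (hcard i)]
    ext a j
    simp only [Matrix.of_apply, Finset.coe_orderIsoOfFin_apply, ← hemb]
  -- abbreviations
  obtain ⟨d, hd⟩ : ∃ d : ℝ, d = β / (α * ((n:ℝ)*α + (p:ℝ)*β)) := ⟨_, rfl⟩
  have hdiv : ∀ (i : Fin k) (l : Fin p), ((f i l : Fin n) : ℕ) / p = (i:ℕ) := by
    intro i l
    show (p * (i:ℕ) + (l:ℕ)) / p = (i:ℕ)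
    rw [Nat.mul_add_div hp, Nat.div_eq_of_lt l.isLt, Nat.add_zero]
  have hcount : ∀ (i : Fin k) (y : Fin n),
      (∑ l : Fin p, (if f i l = y then (1:ℝ) else 0)) = if (y:ℕ)/p = (i:ℕ) then 1 else 0 := by
    intro i y
    by_cases hyi : (y:ℕ)/p = (i:ℕ)
    · rw [if_pos hyi]
      have hdm := Nat.div_add_mod (y:ℕ) p
      rw [hyi] at hdm
      have hy : y = f i ⟨(y:ℕ) % p, Nat.mod_lt _ hp⟩ := by
        apply Fin.ext
        exact hdm.symm
      rw [hy]
      simp [(hmono i).injective.eq_iff]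
    · rw [if_neg hyi]
      apply Finset.sum_eq_zero
      intro l _
      rw [if_neg]
      intro hly
      exact hyi (by rw [← hly, hdiv])
  -- the structured inverse
  have hM : ∀ i, (selector p (J i))ᵀ *
      (α • (1 : Matrix (Fin n) (Fin n) ℝ) + ((β:ℝ)/n) • Matrix.of (fun _ _ => (1:ℝ))) *
      selector p (J i)
      = Matrix.of (fun j l : Fin p => α * (if j = l then (1:ℝ) else 0) + β/n) := by
    intro i
    rw [hsel i]
    ext j l
    simp only [Matrix.mul_apply, Matrix.transpose_apply, Matrix.of_apply, ite_mul, one_mul,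
      zero_mul, mul_ite, mul_one, mul_zero, Finset.sum_ite_eq', Finset.mem_univ, if_true,
      Matrix.add_apply, Matrix.smul_apply, Matrix.one_apply, smul_eq_mul,
      (hmono i).injective.eq_iff]
  have hMN : (Matrix.of (fun j l : Fin p => α * (if j = l then (1:ℝ) else 0) + β/n)) *
      (Matrix.of (fun j l : Fin p => α⁻¹ * (if j = l then (1:ℝ) else 0) - d)) = 1 := by
    ext j l
    rw [Matrix.mul_apply]
    simp only [Matrix.of_apply, add_mul, mul_sub, sub_mul, ite_mul, mul_ite, one_mul, mul_one,
      mul_zero, zero_mul, Finset.sum_add_distrib, Finset.sum_sub_distrib,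
      Finset.sum_ite_eq, Finset.sum_ite_eq', Finset.mem_univ, if_true,
      Finset.sum_const, Finset.card_univ, Fintype.card_fin, nsmul_eq_mul,
      Matrix.one_apply]
    rw [hd]
    split_ifs with h
    · field_simp [hα.ne', hn0.ne', hden.ne']
      linear_combination (-β) * mul_inv_cancel₀ hden.ne'
    · field_simp [hα.ne', hn0.ne', hden.ne']
      linear_combination (-β) * mul_inv_cancel₀ hden.ne'
  have hinv : ∀ i, ((selector p (J i))ᵀ *
      (α • (1 : Matrix (Fin n) (Fin n) ℝ) + ((β:ℝ)/n) • Matrix.of (fun _ _ => (1:ℝ))) *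
      selector p (J i))⁻¹
      = Matrix.of (fun j l : Fin p => α⁻¹ * (if j = l then (1:ℝ) else 0) - d) := by
    intro i
    rw [hM i]
    exact Matrix.inv_eq_right_inv hMN
  -- the entrywise formula for each summand
  have hT : ∀ (i : Fin k),
      (Matrix.of (fun (a : Fin n) (j : Fin p) => if a = f i j then (1:ℝ) else 0) *
        Matrix.of (fun j l : Fin p => α⁻¹ * (if j = l then (1:ℝ) else 0) - d) *
        (Matrix.of (fun (a : Fin n) (j : Fin p) => if a = f i j then (1:ℝ) else 0))ᵀ *
        (α • (1 : Matrix (Fin n) (Fin n) ℝ) + ((β:ℝ)/n) • Matrix.of (fun _ _ => (1:ℝ))))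
      = Matrix.of (fun x y : Fin n => if (x:ℕ)/p = (i:ℕ) then
          ((if x = y then (1:ℝ) else 0) + α⁻¹*(β/n)
            - d*α*(if (y:ℕ)/p = (i:ℕ) then 1 else 0) - d*(β/n)*p)
        else 0) := by
    intro i
    ext x y
    rw [Matrix.mul_assoc, Matrix.mul_assoc, Matrix.of_apply, Matrix.mul_apply]
    by_cases hxi : (x:ℕ)/p = (i:ℕ)
    · rw [if_pos hxi]
      have hdm := Nat.div_add_mod (x:ℕ) p
      rw [hxi] at hdm
      set jx : Fin p := ⟨(x:ℕ) % p, Nat.mod_lt _ hp⟩ with hjx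
      have hfx : f i jx = x := Fin.ext hdm
      have hrow : ∀ j : Fin p, (x = f i j) ↔ (j = jx) := by
        intro j
        constructor
        · intro h
          have h' : p * (i:ℕ) + (j:ℕ) = p * (i:ℕ) + (x:ℕ) % p := by
            have hxv : (x:ℕ) = p * (i:ℕ) + (j:ℕ) := congrArg Fin.val h
            rw [← hxv, hdm]
          exact Fin.ext (Nat.add_left_cancel h')
        · intro h
          rw [h, hfx]
      simp only [Matrix.of_apply, hrow, ite_mul, one_mul, zero_mul,
        Finset.sum_ite_eq', Finset.mem_univ, if_true]
      rw [Matrix.mul_apply]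
      have hSM : ∀ l : Fin p,
          (((Matrix.of (fun (a : Fin n) (j : Fin p) => if a = f i j then (1:ℝ) else 0))ᵀ *
            (α • (1 : Matrix (Fin n) (Fin n) ℝ) + ((β:ℝ)/n) • Matrix.of (fun _ _ => (1:ℝ))) :
            Matrix (Fin p) (Fin n) ℝ)) l y
          = α * (if f i l = y then (1:ℝ) else 0) + β/n := by
        intro l
        simp only [Matrix.mul_apply, Matrix.transpose_apply, Matrix.of_apply, ite_mul, one_mul,
          zero_mul, Finset.sum_ite_eq', Finset.mem_univ, if_true,
          Matrix.add_apply, Matrix.smul_apply, Matrix.one_apply, smul_eq_mul, mul_one]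
      rw [Finset.sum_congr rfl (fun l _ => by rw [hSM l])]
      have expand : ∀ l : Fin p,
          (Matrix.of (fun j l : Fin p => α⁻¹ * (if j = l then (1:ℝ) else 0) - d)) jx l *
            (α * (if f i l = y then (1:ℝ) else 0) + β/n)
          = (if jx = l then α⁻¹*(α * (if f i l = y then (1:ℝ) else 0) + β/n) else 0)
            - d*α*(if f i l = y then (1:ℝ) else 0) - d*(β/n) := by
        intro l
        simp only [Matrix.of_apply]
        split_ifs <;> ring
      rw [Finset.sum_congr rfl (fun l _ => by rw [expand l])]
      rw [Finset.sum_sub_distrib, Finset.sum_sub_distrib, Finset.sum_ite_eq,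
        Finset.sum_const, Finset.card_univ, Fintype.card_fin]
      simp only [Finset.mem_univ, if_true, hfx]
      rw [← Finset.mul_sum, hcount i y]
      have hxy : (if x = y then (1:ℝ) else 0) = (if x = y then (1:ℝ) else 0) := rfl
      rw [mul_add, ← mul_assoc, inv_mul_cancel₀ hα.ne', one_mul, nsmul_eq_mul]
      ring
    · rw [if_neg hxi]
      apply Finset.sum_eq_zero
      intro j _
      rw [Matrix.of_apply, if_neg, zero_mul]
      intro hxj
      exact hxi (by rw [hxj, hdiv])
  -- put everything together
  ext x y
  have hxk : (x:ℕ)/p < k := by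
    have hxn : (x:ℕ) < n := x.isLt
    have h2 : k * p = p * k := Nat.mul_comm k p
    rw [Nat.div_lt_iff_lt_mul hp]
    omega
  set ix : Fin k := ⟨(x:ℕ)/p, hxk⟩ with hix
  have hixval : ((ix : Fin k) : ℕ) = (x:ℕ)/p := rfl
  have hcond : ∀ i : Fin k, ((x:ℕ)/p = (i:ℕ)) ↔ (i = ix) := by
    intro i
    rw [Fin.ext_iff]
    exact eq_comm
  rw [Matrix.smul_apply, Matrix.sum_apply]
  rw [Finset.sum_congr rfl (fun i _ => by
    rw [hinv i, hsel i, hT i, Matrix.of_apply, if_congr (hcond i) rfl rfl])]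
  rw [Finset.sum_ite_eq']
  simp only [Finset.mem_univ, if_true, hixval, Matrix.add_apply, Matrix.sub_apply,
    Matrix.smul_apply, Matrix.one_apply, Matrix.of_apply, smul_eq_mul]
  rw [hd]
  have hk0 : (0:ℝ) < (k:ℝ) := by exact_mod_cast hk
  have hpk : (0:ℝ) < (p:ℝ)*(k:ℝ) := mul_pos hp0 hk0
  have hden' : (0:ℝ) < (p:ℝ)*(k:ℝ)*α + (p:ℝ)*β := by rw [← hnpk']; exact hden
  have h3' : (0:ℝ) < ((p:ℝ)*(k:ℝ))^2*α + (p:ℝ)*(k:ℝ)*(p:ℝ)*β := by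
    nlinarith [mul_pos hpk hden']
  by_cases h1 : x = y
  · rw [if_pos h1]
    have h2 : (x:ℕ)/p = (y:ℕ)/p := by rw [h1]
    rw [if_pos h2, if_pos h2.symm]
    rw [hnpk']
    field_simp [hα.ne', hp0.ne', hk0.ne', hden'.ne', h3'.ne']
    linear_combination (-β) * mul_inv_cancel₀ (ne_of_gt (by nlinarith [mul_nonneg (sub_nonneg.2 hk1) hα.le] : (0:ℝ) < (k:ℝ)*α+β))
  · rw [if_neg h1]
    by_cases h2 : (x:ℕ)/p = (y:ℕ)/p
    · rw [if_pos h2, if_pos h2.symm]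
      rw [hnpk']
      field_simp [hα.ne', hp0.ne', hk0.ne', hden'.ne', h3'.ne']
      linear_combination (-β) * mul_inv_cancel₀ (ne_of_gt (by nlinarith [mul_nonneg (sub_nonneg.2 hk1) hα.le] : (0:ℝ) < (k:ℝ)*α+β))
    · rw [if_neg h2, if_neg (fun h => h2 h.symm)]
      rw [hnpk']
      simp only [mul_zero, zero_mul, mul_one, add_zero, zero_add, sub_zero]
      field_simp [hα.ne', hp0.ne', hk0.ne', hden'.ne', h3'.ne']
      linear_combination (-β) * mul_inv_cancel₀ (ne_of_gt (by nlinarith [mul_nonneg (sub_nonneg.2 hk1) hα.le] : (0:ℝ) < (k:ℝ)*α+β))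


end
end

section
/- Let M_1, …, M_s be linear subspaces of ℝⁿ such that M_1 + M_2 + ⋯ + M_s = ℝⁿ, and let P_{M_i} denote the orthogonal projector onto M_i. Then the matrix Σ_{i=1}^s P_{M_i} is positive definite (hence invertible), and Σ_{i=1}^s P_{M_i} (Σ_{j=1}^s P_{M_j})⁻¹ P_{M_i} ⪯ Σ_{i=1}^s P_{M_i} in the positive semidefinite order. -/
open scoped BigOperators Matrix

open Matrix

lemma psd_sum {ι : Type*} {n : ℕ} (t : Finset ι) (f : ι → Matrix (Fin n) (Fin n) ℝ)
    (h : ∀ i ∈ t, (f i).PosSemidef) : (∑ i ∈ t, f i).PosSemidef :=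
  Finset.sum_induction f _ (fun _ _ ha hb => ha.add hb) .zero h

lemma my_sum_mulVec {ι : Type*} {n : ℕ} (t : Finset ι) (f : ι → Matrix (Fin n) (Fin n) ℝ)
    (x : Fin n → ℝ) : (∑ i ∈ t, f i) *ᵥ x = ∑ i ∈ t, f i *ᵥ x := by
  classical
  induction t using Finset.induction_on with
  | empty => simp
  | insert _ _ ha => rw [Finset.sum_insert ha, Finset.sum_insert ha, Matrix.add_mulVec]; simp [*]

lemma my_dot_sum {ι : Type*} {n : ℕ} (t : Finset ι) (v : ι → (Fin n → ℝ))
    (x : Fin n → ℝ) : x ⬝ᵥ (∑ i ∈ t, v i) = ∑ i ∈ t, x ⬝ᵥ v i := by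
  classical
  induction t using Finset.induction_on with
  | empty => simp
  | insert _ _ ha => rw [Finset.sum_insert ha, Finset.sum_insert ha, dotProduct_add]; simp [*]

/-- If `C` is PSD and `1 - C` is PSD, then `C - C*C` is PSD. -/
lemma psd_sub_sq {n : ℕ} {C : Matrix (Fin n) (Fin n) ℝ}
    (hC : C.PosSemidef) (h1C : (1 - C).PosSemidef) : (C - C * C).PosSemidef := by
  obtain ⟨R, hR, hRR⟩ : ∃ R : Matrix (Fin n) (Fin n) ℝ, R.PosSemidef ∧ R * R = C :=
    open scoped MatrixOrder in
    ⟨CFC.sqrt C, (CFC.sqrt_nonneg C).posSemidef, CFC.sqrt_mul_sqrt_self C hC.nonneg⟩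
  have h2 : R * C * R = C * C := by
    rw [← hRR]; simp only [Matrix.mul_assoc]
  have key : R * (1 - C) * Rᴴ = C - C * C := by
    rw [hR.1, Matrix.mul_sub, Matrix.mul_one, Matrix.sub_mul, hRR, h2]
  rw [← key]
  exact h1C.mul_mul_conjTranspose_same R

set_option maxHeartbeats 1000000 in
/-- Let `M_1, …, M_s` be subspaces of `ℝⁿ` whose sum is all of `ℝⁿ`,
and let `P i` be the orthogonal projector (symmetric idempotent matrix with range `M i`)
onto `M_i`.  Then `Σ P_i` is positive definite (hence invertible) and
`Σ_i P_i (Σ_j P_j)⁻¹ P_i ⪯ Σ_i P_i` in the positive semidefinite order. -/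
theorem stmt13 (n s : ℕ) (M : Fin s → Submodule ℝ (Fin n → ℝ))
    (hspan : (⨆ i, M i) = ⊤)
    (P : Fin s → Matrix (Fin n) (Fin n) ℝ)
    (hsymm : ∀ i, (P i)ᵀ = P i)
    (hidem : ∀ i, P i * P i = P i)
    (hrange : ∀ i, LinearMap.range (P i).mulVecLin = M i) :
    (∑ i, P i).PosDef ∧
    ((∑ i, P i) - ∑ i, P i * (∑ j, P j)⁻¹ * P i).PosSemidef := by
  have hherm : ∀ i, (P i)ᴴ = P i := by
    intro i
    rw [Matrix.conjTranspose_eq_transpose_of_trivial, hsymm i]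
  -- each P i is PSD
  have hPsd : ∀ i, (P i).PosSemidef := by
    intro i
    have : (P i)ᴴ * P i = P i := by rw [hherm i, hidem i]
    rw [← this]
    exact Matrix.posSemidef_conjTranspose_mul_self (P i)
  set S : Matrix (Fin n) (Fin n) ℝ := ∑ i, P i with hSdef
  have hSsd : S.PosSemidef := psd_sum _ _ (fun i _ => hPsd i)
  -- quadratic form of P i equals ‖P i *ᵥ x‖²
  have hquad : ∀ i (x : Fin n → ℝ), x ⬝ᵥ (P i *ᵥ x) = (P i *ᵥ x) ⬝ᵥ (P i *ᵥ x) := by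
    intro i x
    conv_lhs => rw [← hidem i]
    rw [← Matrix.mulVec_mulVec, Matrix.dotProduct_mulVec, ← Matrix.mulVec_transpose, hsymm i]
  -- S is positive definite
  have hS : S.PosDef := by
    refine Matrix.posDef_iff_dotProduct_mulVec.mpr ⟨hSsd.1, fun x hx => ?_⟩
    have hnn := hSsd.dotProduct_mulVec_nonneg x
    have hstar : star x = x := by funext j; simp
    rcases lt_or_eq_of_le hnn with h | h
    · simpa using h
    · exfalso
      -- quadratic form is zero, so each P i *ᵥ x = 0
      have hsum : ∑ i, x ⬝ᵥ (P i *ᵥ x) = 0 := by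
        have hh : star x ⬝ᵥ (S *ᵥ x) = ∑ i, x ⬝ᵥ (P i *ᵥ x) := by
          rw [hstar, hSdef, my_sum_mulVec, my_dot_sum]
        rw [hh] at h
        exact h.symm
      have hzero : ∀ i, P i *ᵥ x = 0 := by
        intro i
        have hnni : ∀ j ∈ Finset.univ, (0:ℝ) ≤ x ⬝ᵥ (P j *ᵥ x) := by
          intro j _
          rw [hquad j x, dotProduct]
          exact Finset.sum_nonneg fun k _ => mul_self_nonneg _
        have := (Finset.sum_eq_zero_iff_of_nonneg hnni).mp hsum i (Finset.mem_univ i)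
        rw [hquad i x] at this
        exact dotProduct_self_eq_zero.mp this
      -- x is orthogonal to each M i, hence to ⊤
      let f : (Fin n → ℝ) →ₗ[ℝ] ℝ :=
        { toFun := fun v => x ⬝ᵥ v
          map_add' := fun a b => dotProduct_add x a b
          map_smul' := fun c a => by simp [dotProduct_smul] }
      have hker : ∀ i, M i ≤ LinearMap.ker f := by
        intro i v hv
        rw [← hrange i] at hv
        obtain ⟨y, hy⟩ := hv
        simp only [LinearMap.mem_ker]
        show x ⬝ᵥ v = 0
        rw [← hy]
        show x ⬝ᵥ (P i *ᵥ y) = 0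
        rw [Matrix.dotProduct_mulVec, ← Matrix.mulVec_transpose, hsymm i, hzero i]
        simp
      have hle : (⊤ : Submodule ℝ (Fin n → ℝ)) ≤ LinearMap.ker f := by
        rw [← hspan]; exact iSup_le hker
      have hfx : f x = 0 := hle (Submodule.mem_top)
      have hxx : x ⬝ᵥ x = 0 := hfx
      exact hx (dotProduct_self_eq_zero.mp hxx)
  refine ⟨hS, ?_⟩
  -- now the PSD inequality
  have hSinv : S⁻¹.PosDef := hS.inv
  obtain ⟨T, hT, hTT⟩ : ∃ T : Matrix (Fin n) (Fin n) ℝ, T.PosSemidef ∧ T * T = S⁻¹ :=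
    open scoped MatrixOrder in
    ⟨CFC.sqrt S⁻¹, (CFC.sqrt_nonneg S⁻¹).posSemidef, CFC.sqrt_mul_sqrt_self S⁻¹ hSinv.posSemidef.nonneg⟩
  have hTH : Tᴴ = T := hT.1
  have hSdet : IsUnit S.det := hS.isUnit.map Matrix.detMonoidHom
  have hSinvdet : IsUnit S⁻¹.det := hSinv.isUnit.map Matrix.detMonoidHom
  have hTdet : IsUnit T.det := by
    have hdd : IsUnit (T.det * T.det) := by rw [← Matrix.det_mul, hTT]; exact hSinvdet
    exact isUnit_of_mul_isUnit_left hdd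
  have hSSinv : S * S⁻¹ = 1 := Matrix.mul_nonsing_inv S hSdet
  have hTinvT : T⁻¹ * T = 1 := Matrix.nonsing_inv_mul T hTdet
  have hTTinv : T * T⁻¹ = 1 := Matrix.mul_nonsing_inv T hTdet
  -- E = T*S*T is idempotent and invertible, hence 1
  have hE : T * S * T = 1 := by
    set E := T * S * T with hEdef
    have hidemE : E * E = E := by
      calc E * E = T * (S * ((T * T) * (S * T))) := by
            rw [hEdef]; simp only [Matrix.mul_assoc]
        _ = T * (S * (S⁻¹ * (S * T))) := by rw [hTT]
        _ = T * ((S * S⁻¹) * (S * T)) := by simp only [Matrix.mul_assoc]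
        _ = E := by rw [hSSinv, Matrix.one_mul, hEdef, Matrix.mul_assoc]
    have hEdet : IsUnit E.det := by
      rw [hEdef, Matrix.det_mul, Matrix.det_mul]
      exact (hTdet.mul hSdet).mul hTdet
    have h1 := congrArg (· * E⁻¹) hidemE
    rw [Matrix.mul_assoc, Matrix.mul_nonsing_inv E hEdet, Matrix.mul_one] at h1
    exact h1
  -- the conjugated projectors
  have hCsd : ∀ i, (T * P i * T).PosSemidef := by
    intro i
    have h := (hPsd i).mul_mul_conjTranspose_same T
    rwa [hTH] at h
  have hCsum : ∑ i, T * P i * T = 1 := by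
    rw [← hE, hSdef, Finset.mul_sum, Finset.sum_mul]
  have hone_sub : ∀ i, (1 - T * P i * T).PosSemidef := by
    intro i
    rw [← hCsum, ← Finset.sum_erase_add _ _ (Finset.mem_univ i), add_sub_assoc, sub_self,
      add_zero]
    exact psd_sum _ _ (fun j _ => hCsd j)
  have hterm : ∀ i, (P i - P i * S⁻¹ * P i).PosSemidef := by
    intro i
    have hkey := psd_sub_sq (hCsd i) (hone_sub i)
    have hCC : T * P i * T - (T * P i * T) * (T * P i * T)
        = T * (P i - P i * S⁻¹ * P i) * T := by
      rw [Matrix.mul_sub, Matrix.sub_mul]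
      congr 1
      calc (T * P i * T) * (T * P i * T) = T * (P i * ((T * T) * (P i * T))) := by
            simp only [Matrix.mul_assoc]
        _ = T * (P i * (S⁻¹ * (P i * T))) := by rw [hTT]
        _ = T * (P i * S⁻¹ * P i) * T := by simp only [Matrix.mul_assoc]
    rw [hCC] at hkey
    have hconj := hkey.mul_mul_conjTranspose_same T⁻¹
    have hTinvH : T⁻¹ᴴ = T⁻¹ := by rw [Matrix.conjTranspose_nonsing_inv, hTH]
    rw [hTinvH] at hconj
    have hred : T⁻¹ * (T * (P i - P i * S⁻¹ * P i) * T) * T⁻¹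
        = P i - P i * S⁻¹ * P i := by
      calc T⁻¹ * (T * (P i - P i * S⁻¹ * P i) * T) * T⁻¹
          = (T⁻¹ * T) * ((P i - P i * S⁻¹ * P i) * (T * T⁻¹)) := by
            simp only [Matrix.mul_assoc]
        _ = P i - P i * S⁻¹ * P i := by
            rw [hTinvT, hTTinv, Matrix.one_mul, Matrix.mul_one]
    rwa [hred] at hconj
  have hfin : S - ∑ i, P i * S⁻¹ * P i = ∑ i, (P i - P i * S⁻¹ * P i) := by
    rw [Finset.sum_sub_distrib, hSdef]
  rw [hfin]
  exact psd_sum _ _ (fun i _ => hterm i)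
end

section
/- Let M be a random real n×m matrix (distribution given by a probability measure, such that E[M], E[MᵀM], and E[P_M] exist). Then E[P_M] ⪰ E[M] (E[MᵀM])† E[Mᵀ] in the positive semidefinite order, where P_M = M(MᵀM)†Mᵀ is the orthogonal projector onto the column space of M and † denotes the Moore–Penrose pseudoinverse. -/
open scoped BigOperators Matrix
open MeasureTheory

noncomputable section

namespace Stmt14Aux

open Matrix

/-- Existence of the Moore–Penrose pseudoinverse of a symmetric real matrix,
via the spectral theorem. -/
lemma exists_mp_symm {k : ℕ} (A : Matrix (Fin k) (Fin k) ℝ) (hAs : Aᵀ = A) :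
    ∃ B, IsMoorePenrose A B := by
  have hA : A.IsHermitian := by
    rw [Matrix.IsHermitian, conjTranspose_eq_transpose_of_trivial]; exact hAs
  set U : Matrix (Fin k) (Fin k) ℝ := (hA.eigenvectorUnitary : Matrix (Fin k) (Fin k) ℝ) with hU
  set d : Fin k → ℝ := hA.eigenvalues with hd
  have hspec : A = U * diagonal d * Uᵀ := by
    have := hA.spectral_theorem
    rw [Unitary.conjStarAlgAut_apply] at this
    rw [← conjTranspose_eq_transpose_of_trivial, ← Matrix.star_eq_conjTranspose]
    exact this
  have hUU : U * Uᵀ = 1 := by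
    rw [← conjTranspose_eq_transpose_of_trivial, ← Matrix.star_eq_conjTranspose]
    exact Unitary.mul_star_self_of_mem hA.eigenvectorUnitary.2
  have hUtU : Uᵀ * U = 1 := by
    rw [← conjTranspose_eq_transpose_of_trivial, ← Matrix.star_eq_conjTranspose]
    exact Unitary.star_mul_self_of_mem hA.eigenvectorUnitary.2
  refine ⟨U * diagonal (fun i => (d i)⁻¹) * Uᵀ, ?_, ?_, ?_, ?_⟩
  · rw [hspec]
    calc U * diagonal d * Uᵀ * (U * diagonal (fun i => (d i)⁻¹) * Uᵀ) * (U * diagonal d * Uᵀ)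
        = U * (diagonal d * (Uᵀ * U) * diagonal (fun i => (d i)⁻¹) * (Uᵀ * U) * diagonal d) * Uᵀ := by
          noncomm_ring
      _ = U * diagonal d * Uᵀ := by
          rw [hUtU, mul_one, mul_one, diagonal_mul_diagonal, diagonal_mul_diagonal]
          congr 2
          funext i
          rcases eq_or_ne (d i) 0 with h | h <;> field_simp [h]
  · rw [hspec]
    calc U * diagonal (fun i => (d i)⁻¹) * Uᵀ * (U * diagonal d * Uᵀ) * (U * diagonal (fun i => (d i)⁻¹) * Uᵀ)
        = U * (diagonal (fun i => (d i)⁻¹) * (Uᵀ * U) * diagonal d * (Uᵀ * U) * diagonal (fun i => (d i)⁻¹)) * Uᵀ := by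
          noncomm_ring
      _ = U * diagonal (fun i => (d i)⁻¹) * Uᵀ := by
          rw [hUtU, mul_one, mul_one, diagonal_mul_diagonal, diagonal_mul_diagonal]
          congr 2
          funext i
          rcases eq_or_ne (d i) 0 with h | h <;> field_simp [h]
  · rw [hspec]
    have : U * diagonal d * Uᵀ * (U * diagonal (fun i => (d i)⁻¹) * Uᵀ)
        = U * (diagonal d * diagonal (fun i => (d i)⁻¹)) * Uᵀ := by
      calc U * diagonal d * Uᵀ * (U * diagonal (fun i => (d i)⁻¹) * Uᵀ)
          = U * (diagonal d * (Uᵀ * U) * diagonal (fun i => (d i)⁻¹)) * Uᵀ := by noncomm_ring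
        _ = _ := by rw [hUtU, mul_one]
    rw [this, diagonal_mul_diagonal]
    simp [transpose_mul, mul_assoc]
  · rw [hspec]
    have : U * diagonal (fun i => (d i)⁻¹) * Uᵀ * (U * diagonal d * Uᵀ)
        = U * (diagonal (fun i => (d i)⁻¹) * diagonal d) * Uᵀ := by
      calc U * diagonal (fun i => (d i)⁻¹) * Uᵀ * (U * diagonal d * Uᵀ)
          = U * (diagonal (fun i => (d i)⁻¹) * (Uᵀ * U) * diagonal d) * Uᵀ := by noncomm_ring
        _ = _ := by rw [hUtU, mul_one]
    rw [this, diagonal_mul_diagonal]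
    simp [transpose_mul, mul_assoc]

/-- Uniqueness of the Moore–Penrose pseudoinverse. -/
lemma mp_unique {m n : ℕ} {A : Matrix (Fin m) (Fin n) ℝ} {B C : Matrix (Fin n) (Fin m) ℝ}
    (hB : IsMoorePenrose A B) (hC : IsMoorePenrose A C) : B = C := by
  obtain ⟨hB1, hB2, hB3, hB4⟩ := hB
  obtain ⟨hC1, hC2, hC3, hC4⟩ := hC
  have hAB : A * B = A * C := by
    calc A * B = (A * B)ᵀ := hB3.symm
      _ = ((A * C * A) * B)ᵀ := by rw [hC1]
      _ = ((A * C) * (A * B))ᵀ := by simp only [Matrix.mul_assoc]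
      _ = (A * B)ᵀ * (A * C)ᵀ := by rw [transpose_mul]
      _ = (A * B) * (A * C) := by rw [hB3, hC3]
      _ = (A * B * A) * C := by simp only [Matrix.mul_assoc]
      _ = A * C := by rw [hB1]
  have hBA : B * A = C * A := by
    calc B * A = (B * A)ᵀ := hB4.symm
      _ = (B * (A * C * A))ᵀ := by rw [hC1]
      _ = ((B * A) * (C * A))ᵀ := by simp only [Matrix.mul_assoc]
      _ = (C * A)ᵀ * (B * A)ᵀ := by rw [transpose_mul]
      _ = (C * A) * (B * A) := by rw [hB4, hC4]
      _ = C * (A * B * A) := by simp only [Matrix.mul_assoc]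
      _ = C * A := by rw [hB1]
  calc B = B * A * B := hB2.symm
    _ = B * (A * C) := by rw [Matrix.mul_assoc, hAB]
    _ = (B * A) * C := by rw [Matrix.mul_assoc]
    _ = (C * A) * C := by rw [hBA]
    _ = C := hC2

lemma pinv_isMP {m n : ℕ} (A : Matrix (Fin m) (Fin n) ℝ) (h : ∃ B, IsMoorePenrose A B) :
    IsMoorePenrose A (pinv A) := by
  rw [pinv, dif_pos h]
  exact h.choose_spec

lemma mp_transpose {m n : ℕ} {A : Matrix (Fin m) (Fin n) ℝ}
    {B : Matrix (Fin n) (Fin m) ℝ} (h : IsMoorePenrose A B) : IsMoorePenrose Aᵀ Bᵀ := by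
  obtain ⟨h1, h2, h3, h4⟩ := h
  have e3 : Aᵀ * Bᵀ = B * A := by rw [← Matrix.transpose_mul]; exact h4
  have e4 : Bᵀ * Aᵀ = A * B := by rw [← Matrix.transpose_mul]; exact h3
  refine ⟨?_, ?_, ?_, ?_⟩
  · calc Aᵀ * Bᵀ * Aᵀ = (A * (B * A))ᵀ := by simp [Matrix.transpose_mul, Matrix.mul_assoc]
      _ = Aᵀ := by rw [← Matrix.mul_assoc, h1]
  · calc Bᵀ * Aᵀ * Bᵀ = (B * (A * B))ᵀ := by simp [Matrix.transpose_mul, Matrix.mul_assoc]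
      _ = Bᵀ := by rw [← Matrix.mul_assoc, h2]
  · rw [e3]; exact h4
  · rw [e4]; exact h3

lemma pinv_symm_of_symm {k : ℕ} (A : Matrix (Fin k) (Fin k) ℝ) (hAs : Aᵀ = A) :
    (pinv A)ᵀ = pinv A := by
  have h := exists_mp_symm A hAs
  have hB := pinv_isMP A h
  have hBt : IsMoorePenrose A (pinv A)ᵀ := by
    have := mp_transpose hB
    rwa [hAs] at this
  exact mp_unique hBt hB

open Matrix in
lemma dot_mulVec_swap {p q : ℕ} (N : Matrix (Fin p) (Fin q) ℝ) (a : Fin q → ℝ) (b : Fin p → ℝ) :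
    (N *ᵥ a) ⬝ᵥ b = a ⬝ᵥ (Nᵀ *ᵥ b) := by
  rw [dotProduct_comm, dotProduct_mulVec, dotProduct_comm, mulVec_transpose]

lemma proj_transpose {n m : ℕ} (M : Matrix (Fin n) (Fin m) ℝ) : (proj M)ᵀ = proj M := by
  have hAs : (Mᵀ * M)ᵀ = Mᵀ * M := by simp [Matrix.transpose_mul]
  have hBs := pinv_symm_of_symm (Mᵀ * M) hAs
  show (M * pinv (Mᵀ * M) * Mᵀ)ᵀ = M * pinv (Mᵀ * M) * Mᵀ
  simp [Matrix.transpose_mul, hBs, Matrix.mul_assoc]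

lemma proj_mul_self {n m : ℕ} (M : Matrix (Fin n) (Fin m) ℝ) : proj M * M = M := by
  have hAs : (Mᵀ * M)ᵀ = Mᵀ * M := by simp [Matrix.transpose_mul]
  obtain ⟨h1, h2, h3, h4⟩ := pinv_isMP (Mᵀ * M) (exists_mp_symm (Mᵀ * M) hAs)
  set A := Mᵀ * M with hA
  set B := pinv A with hBdef
  have hMt : ∀ {p : ℕ} (Z : Matrix (Fin m) (Fin p) ℝ), Mᵀ * (M * Z) = A * Z := by
    intro p Z; rw [hA, Matrix.mul_assoc]
  have h1' : A * (B * A) = A := by rw [← Matrix.mul_assoc]; exact h1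
  have key : M * (B * A) = M := by
    have hz : (M * (B * A) - M)ᵀ * (M * (B * A) - M) = 0 := by
      have hXt : (M * (B * A) - M)ᵀ = B * A * Mᵀ - Mᵀ := by
        rw [Matrix.transpose_sub, Matrix.transpose_mul, h4]
      rw [hXt, Matrix.sub_mul, Matrix.mul_sub, Matrix.mul_sub]
      have t1 : B * A * Mᵀ * (M * (B * A)) = B * (A * A) := by
        rw [Matrix.mul_assoc (B * A) Mᵀ, hMt, Matrix.mul_assoc B A, h1']
      have t2 : B * A * Mᵀ * M = B * (A * A) := by
        rw [Matrix.mul_assoc (B * A) Mᵀ M, ← hA, Matrix.mul_assoc]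
      have t3 : Mᵀ * (M * (B * A)) = A := by rw [hMt, h1']
      rw [t1, t2, t3, ← hA]
      simp
    have hz' : (M * (B * A) - M)ᴴ * (M * (B * A) - M) = 0 := by
      rw [conjTranspose_eq_transpose_of_trivial]; exact hz
    exact sub_eq_zero.mp (Matrix.conjTranspose_mul_self_eq_zero.mp hz')
  show M * pinv (Mᵀ * M) * Mᵀ * M = M
  rw [Matrix.mul_assoc (M * pinv (Mᵀ * M)) Mᵀ M, ← hA, ← hBdef, Matrix.mul_assoc]
  exact key

lemma proj_idem {n m : ℕ} (M : Matrix (Fin n) (Fin m) ℝ) : proj M * proj M = proj M := by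
  have h : Mᵀ * proj M = Mᵀ := by
    have := congrArg Matrix.transpose (proj_mul_self M)
    rw [Matrix.transpose_mul, proj_transpose] at this
    exact this
  show M * pinv (Mᵀ * M) * Mᵀ * proj M = proj M
  rw [Matrix.mul_assoc (M * pinv (Mᵀ * M)) Mᵀ (proj M), h]
  rfl

lemma pointwise_ineq {n m : ℕ} (M : Matrix (Fin n) (Fin m) ℝ) (x : Fin n → ℝ) (u : Fin m → ℝ) :
    2 * (x ⬝ᵥ (M *ᵥ u)) - u ⬝ᵥ ((Mᵀ * M) *ᵥ u) ≤ x ⬝ᵥ (proj M *ᵥ x) := by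
  set P := proj M with hP
  have hPt : Pᵀ = P := proj_transpose M
  have hPM : P * M = M := proj_mul_self M
  have hPP : P * P = P := proj_idem M
  set v := P *ᵥ x - M *ᵥ u with hv
  have hnn : 0 ≤ v ⬝ᵥ v := Finset.sum_nonneg fun i _ => mul_self_nonneg _
  have e1 : (P *ᵥ x) ⬝ᵥ (P *ᵥ x) = x ⬝ᵥ (P *ᵥ x) := by
    rw [dot_mulVec_swap, hPt, Matrix.mulVec_mulVec, hPP]
  have e2 : (P *ᵥ x) ⬝ᵥ (M *ᵥ u) = x ⬝ᵥ (M *ᵥ u) := by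
    rw [dot_mulVec_swap, hPt, Matrix.mulVec_mulVec, hPM]
  have e3 : (M *ᵥ u) ⬝ᵥ (P *ᵥ x) = x ⬝ᵥ (M *ᵥ u) := by
    rw [dotProduct_comm]; exact e2
  have e4 : (M *ᵥ u) ⬝ᵥ (M *ᵥ u) = u ⬝ᵥ ((Mᵀ * M) *ᵥ u) := by
    rw [dot_mulVec_swap, Matrix.mulVec_mulVec]
  rw [hv, sub_dotProduct, dotProduct_sub, dotProduct_sub, e1, e2, e3, e4] at hnn
  linarith

variable {Ω : Type*} [MeasurableSpace Ω] (ℙ : Measure Ω)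

lemma integrable_dot {k l : ℕ} (f : Ω → Matrix (Fin k) (Fin l) ℝ)
    (hf : ∀ i j, Integrable (fun ω => f ω i j) ℙ) (x : Fin k → ℝ) (u : Fin l → ℝ) :
    Integrable (fun ω => x ⬝ᵥ (f ω *ᵥ u)) ℙ := by
  have : (fun ω => x ⬝ᵥ (f ω *ᵥ u))
      = fun ω => ∑ i, ∑ j, x i * (f ω i j * u j) := by
    funext ω; simp [dotProduct, Matrix.mulVec, Finset.mul_sum]
  rw [this]
  exact integrable_finset_sum _ fun i _ => integrable_finset_sum _ fun j _ =>
    (((hf i j).mul_const (u j)).const_mul (x i))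

lemma integral_dot {k l : ℕ} (f : Ω → Matrix (Fin k) (Fin l) ℝ)
    (hf : ∀ i j, Integrable (fun ω => f ω i j) ℙ) (x : Fin k → ℝ) (u : Fin l → ℝ) :
    ∫ ω, x ⬝ᵥ (f ω *ᵥ u) ∂ℙ = x ⬝ᵥ (Mexp ℙ f *ᵥ u) := by
  have h : (fun ω => x ⬝ᵥ (f ω *ᵥ u))
      = fun ω => ∑ i, ∑ j, x i * (f ω i j * u j) := by
    funext ω; simp [dotProduct, Matrix.mulVec, Finset.mul_sum]
  rw [h, integral_finset_sum _ fun i _ => integrable_finset_sum _ fun j _ =>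
    (((hf i j).mul_const (u j)).const_mul (x i))]
  have : ∀ i, ∫ ω, ∑ j, x i * (f ω i j * u j) ∂ℙ = ∑ j, x i * ((∫ ω, f ω i j ∂ℙ) * u j) := by
    intro i
    rw [integral_finset_sum _ fun j _ => (((hf i j).mul_const (u j)).const_mul (x i))]
    refine Finset.sum_congr rfl fun j _ => ?_
    rw [integral_const_mul, integral_mul_const]
  simp only [this]
  simp [Mexp, dotProduct, Matrix.mulVec, Finset.mul_sum]

end Stmt14Aux

open Stmt14Aux in
/-- For a random `n×m` real matrix `M` (with the relevant expectations
existing), `E[P_M] ⪰ E[M] (E[MᵀM])† E[Mᵀ]` in the positive semidefinite order. -/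
theorem stmt14 {Ω : Type*} [MeasurableSpace Ω] (ℙ : Measure Ω) [IsProbabilityMeasure ℙ]
    (n m : ℕ) (M : Ω → Matrix (Fin n) (Fin m) ℝ)
    (hMint : ∀ i j, Integrable (fun ω => M ω i j) ℙ)
    (hMtMint : ∀ i j, Integrable (fun ω => ((M ω)ᵀ * M ω) i j) ℙ)
    (hPint : ∀ i j, Integrable (fun ω => proj (M ω) i j) ℙ) :
    (Mexp ℙ (fun ω => proj (M ω))
      - Mexp ℙ M * pinv (Mexp ℙ (fun ω => (M ω)ᵀ * M ω)) * Mexp ℙ (fun ω => (M ω)ᵀ)).PosSemidef := by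
  set S := Mexp ℙ (fun ω => (M ω)ᵀ * M ω) with hS
  set T := Mexp ℙ (fun ω => (M ω)ᵀ) with hT
  set EM := Mexp ℙ M with hEM
  set EP := Mexp ℙ (fun ω => proj (M ω)) with hEP
  have hTt : Tᵀ = EM := by ext i j; rfl
  have hEMt : EMᵀ = T := by ext i j; rfl
  have hSs : Sᵀ = S := by
    rw [hS]
    ext i j
    show (∫ ω, ((M ω)ᵀ * M ω) j i ∂ℙ) = ∫ ω, ((M ω)ᵀ * M ω) i j ∂ℙ
    congr 1
    funext ω
    have h : ((M ω)ᵀ * M ω)ᵀ = (M ω)ᵀ * M ω := by simp [Matrix.transpose_mul]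
    rw [show ((M ω)ᵀ * M ω) j i = (((M ω)ᵀ * M ω)ᵀ) i j from rfl, h]
  obtain ⟨g1, g2, g3, g4⟩ := pinv_isMP S (exists_mp_symm S hSs)
  set G := pinv S with hG
  have hGs : Gᵀ = G := pinv_symm_of_symm S hSs
  rw [Matrix.posSemidef_iff_dotProduct_mulVec]
  constructor
  · show (EP - EM * G * T).IsHermitian
    rw [Matrix.IsHermitian, Matrix.conjTranspose_eq_transpose_of_trivial, Matrix.transpose_sub]
    have hEPt : EPᵀ = EP := by
      rw [hEP]
      ext i j
      show (∫ ω, proj (M ω) j i ∂ℙ) = ∫ ω, proj (M ω) i j ∂ℙ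
      congr 1
      funext ω
      rw [show proj (M ω) j i = (proj (M ω))ᵀ i j from rfl, proj_transpose]
    have h2 : (EM * G * T)ᵀ = EM * G * T := by
      rw [Matrix.transpose_mul, Matrix.transpose_mul, hGs, hTt, hEMt, ← Matrix.mul_assoc]
    rw [hEPt, h2]
  · intro x
    have hsx : star x = x := by simp
    rw [hsx, Matrix.sub_mulVec, dotProduct_sub, sub_nonneg]
    set u := G *ᵥ (T *ᵥ x) with hu
    have hQ : x ⬝ᵥ (EM *ᵥ u) = x ⬝ᵥ ((EM * G * T) *ᵥ x) := by
      rw [hu, Matrix.mulVec_mulVec, Matrix.mulVec_mulVec]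
    have hQ2 : u ⬝ᵥ (S *ᵥ u) = x ⬝ᵥ (EM *ᵥ u) := by
      calc u ⬝ᵥ (S *ᵥ u) = (T *ᵥ x) ⬝ᵥ (Gᵀ *ᵥ (S *ᵥ u)) := dot_mulVec_swap G (T *ᵥ x) _
        _ = (T *ᵥ x) ⬝ᵥ ((G * S * G) *ᵥ (T *ᵥ x)) := by
            rw [hGs, hu, Matrix.mulVec_mulVec, Matrix.mulVec_mulVec]
        _ = (T *ᵥ x) ⬝ᵥ u := by rw [g2, hu]
        _ = x ⬝ᵥ (Tᵀ *ᵥ u) := dot_mulVec_swap T x u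
        _ = x ⬝ᵥ (EM *ᵥ u) := by rw [hTt]
    have hle : ∀ ω, 2 * (x ⬝ᵥ (M ω *ᵥ u)) - u ⬝ᵥ (((M ω)ᵀ * M ω) *ᵥ u)
        ≤ x ⬝ᵥ (proj (M ω) *ᵥ x) := fun ω => pointwise_ineq (M ω) x u
    have hint1 := integrable_dot ℙ M hMint x u
    have hint2 := integrable_dot ℙ (fun ω => (M ω)ᵀ * M ω) hMtMint u u
    have hint3 := integrable_dot ℙ (fun ω => proj (M ω)) hPint x x
    have hmono : (∫ ω, (2 * (x ⬝ᵥ (M ω *ᵥ u)) - u ⬝ᵥ (((M ω)ᵀ * M ω) *ᵥ u)) ∂ℙ)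
        ≤ ∫ ω, x ⬝ᵥ (proj (M ω) *ᵥ x) ∂ℙ :=
      integral_mono ((hint1.const_mul 2).sub hint2) hint3 hle
    rw [integral_sub (hint1.const_mul 2) hint2, integral_const_mul,
      integral_dot ℙ M hMint x u,
      integral_dot ℙ (fun ω => (M ω)ᵀ * M ω) hMtMint u u,
      integral_dot ℙ (fun ω => proj (M ω)) hPint x x,
      ← hS, ← hEM, ← hEP] at hmono
    rw [← hQ]
    linarith [hmono, hQ2]

end
end
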